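/- arXiv:1901.04865 — 3 statements merged into one kernel-verified Lean document; each statement's English description precedes it below -/
import Mathlib

section
/- Let X be a real random variable with mean zero, variance σ² > 0, and suppose |E[X^j]| ≤ (j!)^(1+γ) K^(j−2) σ² for all j ≥ 3 (generalized Bernstein condition). Then the j-th cumulant of X satisfies |Γ_j(X)| ≤ (j!)^(1+γ) (2 max{K, σ})^(j−2) σ² for all j ≥ 3. -/
open MeasureTheory ProbabilityTheory

open Real Set Filter Topology Finset


lemma iteratedDeriv_zero_of_Ici {f : ℝ → ℝ} (h : ∀ x : ℝ, 0 ≤ x → f x = 0) :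
    ∀ j : ℕ, ∀ x : ℝ, 0 ≤ x → iteratedDeriv j f x = 0 := by
  intro j
  induction j with
  | zero => intro x hx; simpa using h x hx
  | succ j ih =>
    intro x hx
    rw [iteratedDeriv_succ]
    rcases eq_or_lt_of_le hx with rfl | hx'
    · by_cases hd : DifferentiableAt ℝ (iteratedDeriv j f) 0
      · have hu : UniqueDiffWithinAt ℝ (Ici (0:ℝ)) 0 := uniqueDiffOn_Ici 0 0 (by simp)
        have h1 : derivWithin (iteratedDeriv j f) (Ici 0) 0 = deriv (iteratedDeriv j f) 0 :=
          hd.derivWithin hu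
        have h2 : derivWithin (iteratedDeriv j f) (Ici (0:ℝ)) 0
            = derivWithin (fun _ : ℝ => (0:ℝ)) (Ici (0:ℝ)) 0 :=
          derivWithin_congr (fun y hy => ih y hy) (ih 0 le_rfl)
        rw [← h1, h2]
        exact congrFun (derivWithin_const (c := (0:ℝ)) (s := Ici (0:ℝ))) 0
      · exact deriv_zero_of_not_differentiableAt hd
    · have he : iteratedDeriv j f =ᶠ[𝓝 x] fun _ => (0:ℝ) :=
        eventually_of_mem (Ioi_mem_nhds hx') (fun y hy => ih y (le_of_lt hy))
      rw [he.deriv_eq, deriv_const]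

lemma integrable_exp_mul_between {Ω : Type*} [MeasurableSpace Ω] {μ : Measure Ω}
    {X : Ω → ℝ} (hm : AEMeasurable X μ) {a b t : ℝ}
    (ha : Integrable (fun ω => exp (a * X ω)) μ)
    (hb : Integrable (fun ω => exp (b * X ω)) μ)
    (hat : a ≤ t) (htb : t ≤ b) :
    Integrable (fun ω => exp (t * X ω)) μ := by
  refine (ha.add hb).mono ?_ ?_
  · exact (measurable_exp.comp_aemeasurable (hm.const_mul t)).aestronglyMeasurable
  · filter_upwards with ω
    have hle : t * X ω ≤ a * X ω ∨ t * X ω ≤ b * X ω := by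
      rcases le_or_gt (X ω) 0 with h0 | h0
      · left; nlinarith
      · right; nlinarith
    have h1 : exp (t * X ω) ≤ exp (a * X ω) + exp (b * X ω) := by
      rcases hle with h | h
      · exact le_add_of_le_of_nonneg (exp_le_exp.2 h) (exp_nonneg _)
      · exact le_add_of_nonneg_of_le (exp_nonneg _) (exp_le_exp.2 h)
    have h2 : (0:ℝ) < exp (a * X ω) + exp (b * X ω) :=
      add_pos (exp_pos _) (exp_pos _)
    simp only [Pi.add_apply, norm_eq_abs, abs_of_pos (exp_pos _), abs_of_pos h2]
    exact h1

lemma key_exp_bound (n : ℕ) {ε : ℝ} (hε : 0 < ε) (t y : ℝ) :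
    |y| ^ n * exp (t * y) ≤ (n.factorial : ℝ) * ε⁻¹ ^ n * (exp ((t+ε)*y) + exp ((t-ε)*y)) := by
  have h1 : (ε * |y|) ^ n / (n.factorial : ℝ) ≤ exp (ε * |y|) := by
    calc (ε * |y|) ^ n / (n.factorial : ℝ)
        ≤ ∑ i ∈ range (n+1), (ε * |y|) ^ i / (i.factorial : ℝ) := by
          refine Finset.single_le_sum (f := fun i => (ε * |y|) ^ i / (i.factorial : ℝ))
            (fun i _ => by positivity) (Finset.self_mem_range_succ n)
      _ ≤ exp (ε * |y|) := Real.sum_le_exp_of_nonneg (by positivity) _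
  have h2 : |y| ^ n ≤ (n.factorial : ℝ) * ε⁻¹ ^ n * exp (ε * |y|) := by
    have := (div_le_iff₀ (by positivity : (0:ℝ) < (n.factorial : ℝ))).1 h1
    rw [mul_pow] at this
    have hεn : (0:ℝ) < ε ^ n := by positivity
    calc |y| ^ n = (ε ^ n * |y| ^ n) / ε ^ n := by field_simp
      _ ≤ (exp (ε * |y|) * (n.factorial : ℝ)) / ε ^ n := by
          gcongr
      _ = (n.factorial : ℝ) * ε⁻¹ ^ n * exp (ε * |y|) := by
          rw [inv_pow]; field_simp
  have h3 : exp (ε * |y|) * exp (t * y) ≤ exp ((t+ε)*y) + exp ((t-ε)*y) := by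
    rw [← Real.exp_add]
    rcases le_or_gt 0 y with hy | hy
    · rw [abs_of_nonneg hy]
      exact le_add_of_le_of_nonneg (by rw [exp_le_exp]; ring_nf; exact le_rfl) (exp_nonneg _)
    · rw [abs_of_neg hy]
      refine le_add_of_nonneg_of_le (exp_nonneg _) ?_
      rw [exp_le_exp]; ring_nf; exact le_rfl
  calc |y| ^ n * exp (t * y)
      ≤ ((n.factorial : ℝ) * ε⁻¹ ^ n * exp (ε * |y|)) * exp (t * y) := by
        apply mul_le_mul_of_nonneg_right h2 (exp_nonneg _)
    _ = (n.factorial : ℝ) * ε⁻¹ ^ n * (exp (ε * |y|) * exp (t * y)) := by ring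
    _ ≤ (n.factorial : ℝ) * ε⁻¹ ^ n * (exp ((t+ε)*y) + exp ((t-ε)*y)) := by
        apply mul_le_mul_of_nonneg_left h3 (by positivity)

section MomentDeriv

variable {Ω : Type*} [MeasurableSpace Ω] {μ : Measure Ω} [IsProbabilityMeasure μ]
  {X : Ω → ℝ} {a b : ℝ}

lemma exp_interp {t y : ℝ} {a b : ℝ} (hat : a ≤ t) (htb : t ≤ b) :
    exp (t * y) ≤ exp (a * y) + exp (b * y) := by
  rcases le_or_gt 0 y with h0 | h0
  · exact le_add_of_nonneg_of_le (exp_nonneg _) (exp_le_exp.2 (by nlinarith))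
  · exact le_add_of_le_of_nonneg (exp_le_exp.2 (by nlinarith)) (exp_nonneg _)

lemma integrable_pow_mul_exp (hm : AEMeasurable X μ)
    (ha : Integrable (fun ω => exp (a * X ω)) μ)
    (hb : Integrable (fun ω => exp (b * X ω)) μ)
    (n : ℕ) {t : ℝ} (hat : a < t) (htb : t < b) :
    Integrable (fun ω => X ω ^ n * exp (t * X ω)) μ := by
  set ε := min (t - a) (b - t) with hεdef
  have hε : 0 < ε := lt_min (by linarith) (by linarith)
  have h1 : a ≤ t - ε := by
    have := min_le_left (t - a) (b - t); simp only [← hεdef] at this; linarith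
  have h2 : t + ε ≤ b := by
    have := min_le_right (t - a) (b - t); simp only [← hεdef] at this; linarith
  have hip : Integrable (fun ω => exp ((t + ε) * X ω)) μ := by
    apply (ha.add hb).mono
      ((measurable_exp.comp_aemeasurable (hm.const_mul _)).aestronglyMeasurable)
    filter_upwards with ω
    simp only [Function.comp_apply, Pi.add_apply, norm_eq_abs, abs_of_pos (exp_pos _),
      abs_of_pos (add_pos (exp_pos _) (exp_pos _))]
    exact exp_interp (t := t + ε) (show a ≤ t + ε by linarith) h2
  have him : Integrable (fun ω => exp ((t - ε) * X ω)) μ := by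
    apply (ha.add hb).mono
      ((measurable_exp.comp_aemeasurable (hm.const_mul _)).aestronglyMeasurable)
    filter_upwards with ω
    simp only [Function.comp_apply, Pi.add_apply, norm_eq_abs, abs_of_pos (exp_pos _),
      abs_of_pos (add_pos (exp_pos _) (exp_pos _))]
    exact exp_interp (t := t - ε) h1 (show t - ε ≤ b by linarith)
  refine (((hip.add him).const_mul ((n.factorial : ℝ) * ε⁻¹ ^ n)).mono
    ((((hm.pow_const n).mul
      (measurable_exp.comp_aemeasurable (hm.const_mul t))).aestronglyMeasurable)) ?_)
  filter_upwards with ω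
  have hkey := key_exp_bound n hε t (X ω)
  have h3 : ‖X ω ^ n * exp (t * X ω)‖ = |X ω| ^ n * exp (t * X ω) := by
    rw [norm_eq_abs, abs_mul, abs_pow, abs_of_pos (exp_pos _)]
  rw [h3]
  refine hkey.trans ?_
  rw [norm_eq_abs]
  exact le_abs_self _

lemma hasDerivAt_int_pow_mul_exp (hm : AEMeasurable X μ)
    (ha : Integrable (fun ω => exp (a * X ω)) μ)
    (hb : Integrable (fun ω => exp (b * X ω)) μ)
    (n : ℕ) {t : ℝ} (hat : a < t) (htb : t < b) :
    HasDerivAt (fun u => ∫ ω, X ω ^ n * exp (u * X ω) ∂μ)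
      (∫ ω, X ω ^ (n+1) * exp (t * X ω) ∂μ) t := by
  set ε := min (t - a) (b - t) / 2 with hεdef
  have hε : 0 < ε := by
    have : (0:ℝ) < min (t - a) (b - t) := lt_min (by linarith) (by linarith)
    positivity
  have h1 : a < t - ε := by
    have := min_le_left (t - a) (b - t); rw [hεdef]; linarith
  have h2 : t + ε < b := by
    have := min_le_right (t - a) (b - t); rw [hεdef]; linarith
  have hboundInt : Integrable (fun ω =>
      |X ω| ^ (n+1) * exp ((t+ε) * X ω) + |X ω| ^ (n+1) * exp ((t-ε) * X ω)) μ := by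
    have e1 : Integrable (fun ω => |X ω| ^ (n+1) * exp ((t+ε) * X ω)) μ := by
      refine ((integrable_pow_mul_exp hm ha hb (n+1) (by linarith) h2).abs).congr ?_
      filter_upwards with ω
      rw [abs_mul, abs_pow, abs_of_pos (exp_pos _)]
    have e2 : Integrable (fun ω => |X ω| ^ (n+1) * exp ((t-ε) * X ω)) μ := by
      refine ((integrable_pow_mul_exp hm ha hb (n+1) h1 (by linarith)).abs).congr ?_
      filter_upwards with ω
      rw [abs_mul, abs_pow, abs_of_pos (exp_pos _)]
    exact e1.add e2
  have := hasDerivAt_integral_of_dominated_loc_of_deriv_le (μ := μ)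
    (F := fun u ω => X ω ^ n * exp (u * X ω))
    (F' := fun u ω => X ω ^ (n+1) * exp (u * X ω))
    (x₀ := t)
    (bound := fun ω => |X ω| ^ (n+1) * exp ((t+ε) * X ω) + |X ω| ^ (n+1) * exp ((t-ε) * X ω))
    (Metric.ball_mem_nhds t hε)
    (Filter.Eventually.of_forall (fun x => (((hm.pow_const n).mul
      (measurable_exp.comp_aemeasurable (hm.const_mul x))).aestronglyMeasurable)))
    (integrable_pow_mul_exp hm ha hb n hat htb)
    (((hm.pow_const (n+1)).mul
      (measurable_exp.comp_aemeasurable (hm.const_mul t))).aestronglyMeasurable)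
    ?_ hboundInt ?_
  · exact this.2
  · filter_upwards with ω x hx
    rw [Metric.mem_ball, Real.dist_eq] at hx
    have hx1 : t - ε ≤ x := by cases abs_lt.1 hx; linarith
    have hx2 : x ≤ t + ε := by cases abs_lt.1 hx; linarith
    have : ‖X ω ^ (n+1) * exp (x * X ω)‖ = |X ω| ^ (n+1) * exp (x * X ω) := by
      rw [norm_eq_abs, abs_mul, abs_pow, abs_of_pos (exp_pos _)]
    rw [this, ← mul_add, add_comm (exp ((t + ε) * X ω))]
    exact mul_le_mul_of_nonneg_left (exp_interp (a := t - ε) (b := t + ε) hx1 hx2) (by positivity)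
  · filter_upwards with ω x _
    have h : HasDerivAt (fun u => X ω ^ n * exp (u * X ω))
        (X ω ^ n * (exp (x * X ω) * X ω)) x :=
      ((hasDerivAt_mul_const (X ω)).exp).const_mul (X ω ^ n)
    refine h.congr_deriv ?_
    rw [pow_succ]
    ring

end MomentDeriv

lemma pascal_sum_aux (a b : ℕ → ℝ) (n : ℕ) :
    ∑ i ∈ range (n+1), (n.choose i : ℝ) * (a (i+1) * b (n-i) + a i * b (n+1-i))
      = ∑ i ∈ range (n+2), ((n+1).choose i : ℝ) * (a i * b (n+1-i)) := by
  have hS2 : ∑ i ∈ range (n+1), (n.choose i : ℝ) * (a i * b (n+1-i))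
      = (∑ i ∈ range n, (n.choose (i+1) : ℝ) * (a (i+1) * b (n-i)))
        + (n.choose 0 : ℝ) * (a 0 * b (n+1)) := by
    rw [Finset.sum_range_succ']
    simp [Nat.succ_sub_succ]
  have hS2' : ∑ i ∈ range n, (n.choose (i+1) : ℝ) * (a (i+1) * b (n-i))
      = ∑ i ∈ range (n+1), (n.choose (i+1) : ℝ) * (a (i+1) * b (n-i)) := by
    rw [Finset.sum_range_succ, Nat.choose_succ_self]
    simp
  have hR : ∑ i ∈ range (n+2), ((n+1).choose i : ℝ) * (a i * b (n+1-i))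
      = (∑ i ∈ range (n+1), ((n+1).choose (i+1) : ℝ) * (a (i+1) * b (n-i)))
        + ((n+1).choose 0 : ℝ) * (a 0 * b (n+1)) := by
    rw [Finset.sum_range_succ']
    simp [Nat.succ_sub_succ]
  rw [hR]
  have hsplit : ∀ i ∈ range (n+1), ((n+1).choose (i+1) : ℝ) * (a (i+1) * b (n-i))
      = (n.choose i : ℝ) * (a (i+1) * b (n-i))
        + (n.choose (i+1) : ℝ) * (a (i+1) * b (n-i)) := by
    intro i _
    rw [Nat.choose_succ_succ]
    push_cast
    ring
  rw [Finset.sum_congr rfl hsplit, Finset.sum_add_distrib]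
  simp only [mul_add, Finset.sum_add_distrib, hS2, ← hS2']
  simp [Nat.choose_zero_right]
  ring


/-- local smoothness witness -/
def SD (s : Set ℝ) (f : ℝ → ℝ) : Prop :=
  ∀ (i : ℕ), ∀ x ∈ s, HasDerivAt (iteratedDeriv i f) (iteratedDeriv (i+1) f x) x

lemma sd_congr {s : Set ℝ} (hs : IsOpen s) {f g : ℝ → ℝ} (hfg : Set.EqOn f g s)
    (hg : SD s g) : SD s f := by
  intro i x hx
  have hIt : ∀ i : ℕ, Set.EqOn (iteratedDeriv i f) (iteratedDeriv i g) s := fun i =>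
    hfg.iteratedDeriv_of_isOpen hs i
  have h1 : iteratedDeriv i f =ᶠ[𝓝 x] iteratedDeriv i g :=
    eventually_of_mem (hs.mem_nhds hx) (fun y hy => hIt i hy)
  have h2 := (hg i x hx).congr_of_eventuallyEq h1
  have h3 := hIt (i+1) hx
  rw [h3]
  exact h2

lemma sd_of_contDiffOn {s : Set ℝ} (hs : IsOpen s) {f : ℝ → ℝ}
    (h : ContDiffOn ℝ (((⊤:ℕ∞)) : WithTop ℕ∞) f s) : SD s f := by
  intro i x hx
  have hEq : Set.EqOn (iteratedDerivWithin i f s) (iteratedDeriv i f) s := fun y hy => by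
    rw [iteratedDerivWithin_eq_iteratedFDerivWithin, iteratedDeriv_eq_iteratedFDeriv,
      iteratedFDerivWithin_of_isOpen i hs hy]
  have hdo : DifferentiableOn ℝ (iteratedDerivWithin i f s) s :=
    h.differentiableOn_iteratedDerivWithin (by exact_mod_cast WithTop.coe_lt_top _)
      hs.uniqueDiffOn
  have hda : DifferentiableAt ℝ (iteratedDeriv i f) x := by
    have h1 := (hdo x hx).differentiableAt (hs.mem_nhds hx)
    refine h1.congr_of_eventuallyEq ?_
    exact eventually_of_mem (hs.mem_nhds hx) (fun y hy => (hEq hy).symm)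
  have := hda.hasDerivAt
  rwa [← iteratedDeriv_succ] at this

section DerivSystem

variable {A : ℕ → ℝ → ℝ} {s : Set ℝ}

lemma iteratedDeriv_system (hs : IsOpen s)
    (hd : ∀ n, ∀ x ∈ s, HasDerivAt (A n) (A (n+1) x) x) :
    ∀ n k : ℕ, ∀ x ∈ s, iteratedDeriv n (A k) x = A (n+k) x := by
  intro n
  induction n with
  | zero => intro k x _; simp
  | succ n ih =>
    intro k x hx
    have hE : iteratedDeriv n (A k) =ᶠ[𝓝 x] A (n+k) :=
      eventually_of_mem (hs.mem_nhds hx) (fun y hy => ih k y hy)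
    rw [iteratedDeriv_succ, hE.deriv_eq, (hd (n+k) x hx).deriv]
    ring_nf

lemma contDiffOn_system (hs : IsOpen s)
    (hd : ∀ n, ∀ x ∈ s, HasDerivAt (A n) (A (n+1) x) x) :
    ∀ k : ℕ, ContDiffOn ℝ (((⊤:ℕ∞)) : WithTop ℕ∞) (A k) s := by
  have key : ∀ m : ℕ, ∀ k : ℕ, ContDiffOn ℝ m (A k) s := by
    intro m
    induction m with
    | zero =>
      intro k
      rw [show ((0:ℕ) : WithTop ℕ∞) = 0 by norm_cast, contDiffOn_zero]
      intro x hx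
      exact ((hd k x hx).differentiableAt.continuousAt).continuousWithinAt
    | succ m ih =>
      intro k
      rw [show (((m+1:ℕ)) : WithTop ℕ∞) = (m : WithTop ℕ∞) + 1 by norm_cast,
        contDiffOn_succ_iff_deriv_of_isOpen hs]
      refine ⟨fun x hx => ((hd k x hx).differentiableAt).differentiableWithinAt, ?_, ?_⟩
      · intro hω; exact absurd hω (by simp)
      · refine (ih (k+1)).congr (fun x hx => ?_)
        exact (hd k x hx).deriv
  intro k
  rw [contDiffOn_infty]
  exact fun n => key n k

lemma sd_system (hs : IsOpen s)
    (hd : ∀ n, ∀ x ∈ s, HasDerivAt (A n) (A (n+1) x) x) (k : ℕ) : SD s (A k) :=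
  sd_of_contDiffOn hs (contDiffOn_system hs hd k)

end DerivSystem
lemma sd_leibniz {s : Set ℝ} (hs : IsOpen s) {f g : ℝ → ℝ} (hf : SD s f) (hg : SD s g) :
    ∀ n : ℕ, ∀ x ∈ s, iteratedDeriv n (fun y => f y * g y) x
      = ∑ i ∈ range (n+1),
          (n.choose i : ℝ) * (iteratedDeriv i f x * iteratedDeriv (n-i) g x) := by
  intro n
  induction n with
  | zero => intro x _; simp
  | succ n ih =>
    intro x hx
    have hE : iteratedDeriv n (fun y => f y * g y) =ᶠ[𝓝 x]
        fun y => ∑ i ∈ range (n+1),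
          (n.choose i : ℝ) * (iteratedDeriv i f y * iteratedDeriv (n-i) g y) :=
      eventually_of_mem (hs.mem_nhds hx) (fun y hy => ih y hy)
    have hD : HasDerivAt (fun y => ∑ i ∈ range (n+1),
          (n.choose i : ℝ) * (iteratedDeriv i f y * iteratedDeriv (n-i) g y))
        (∑ i ∈ range (n+1), (n.choose i : ℝ) *
          (iteratedDeriv (i+1) f x * iteratedDeriv (n-i) g x
            + iteratedDeriv i f x * iteratedDeriv (n-i+1) g x)) x := by
      refine HasDerivAt.fun_sum (fun i _ => ?_)
      exact ((hf i x hx).mul (hg (n-i) x hx)).const_mul _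
    rw [iteratedDeriv_succ, hE.deriv_eq, hD.deriv]
    have hsub : ∀ i ∈ range (n+1), (n.choose i : ℝ) *
          (iteratedDeriv (i+1) f x * iteratedDeriv (n-i) g x
            + iteratedDeriv i f x * iteratedDeriv (n-i+1) g x)
        = (n.choose i : ℝ) *
          (iteratedDeriv (i+1) f x * iteratedDeriv (n-i) g x
            + iteratedDeriv i f x * iteratedDeriv (n+1-i) g x) := by
      intro i hi
      rw [Finset.mem_range] at hi
      have : n - i + 1 = n + 1 - i := by omega
      rw [this]
    rw [Finset.sum_congr rfl hsub]
    exact pascal_sum_aux (fun i => iteratedDeriv i f x) (fun k => iteratedDeriv k g x) n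

lemma term_ineq (γ M σ : ℝ) (hγ : 0 ≤ γ) (hσ : 0 < σ) (hσM : σ ≤ M)
    (n i : ℕ) (h1 : 1 ≤ i) (h2 : i + 2 ≤ n) :
    (n.choose i : ℝ) * ((((i+1).factorial:ℝ))^(1+γ) * (2*M)^(i-1) * σ^2)
        * ((((n-i).factorial:ℝ))^(1+γ) * M^(n-i-2) * σ^2)
      ≤ (((n+1).factorial:ℝ))^(1+γ) * M^(n-1) * σ^2 * 2^(i-1) := by
  have hM : 0 < M := hσ.trans_le hσM
  set P : ℝ := ((i+1).factorial : ℝ) * ((n-i).factorial : ℝ) with hP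
  have hPpos : 0 < P := by positivity
  have hfact1 : (n.choose i : ℝ) * P ≤ ((n+1).factorial : ℝ) := by
    have hnat : n.choose i * ((i+1).factorial * (n-i).factorial) ≤ (n+1).factorial := by
      have he : n.choose i * ((i+1).factorial * (n-i).factorial)
          = (n.choose i * i.factorial * (n-i).factorial) * (i+1) := by
        rw [Nat.factorial_succ]; ring
      rw [he, Nat.choose_mul_factorial_mul_factorial (by omega : i ≤ n)]
      calc n.factorial * (i+1) ≤ n.factorial * (n+1) := by
            exact Nat.mul_le_mul_left _ (by omega)
        _ = (n+1).factorial := by rw [Nat.factorial_succ]; ring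
    calc (n.choose i : ℝ) * P = ((n.choose i * ((i+1).factorial * (n-i).factorial) : ℕ) : ℝ) := by
          push_cast [hP]; ring
      _ ≤ ((n+1).factorial : ℝ) := by exact_mod_cast hnat
  have hfact2 : P ≤ ((n+1).factorial : ℝ) := by
    have hnat : (i+1).factorial * (n-i).factorial ≤ (n+1).factorial := by
      refine Nat.le_of_dvd (Nat.factorial_pos _) ?_
      have := Nat.factorial_mul_factorial_dvd_factorial_add (i+1) (n-i)
      have he : i + 1 + (n - i) = n + 1 := by omega
      rwa [he] at this
    calc P = (((i+1).factorial * (n-i).factorial : ℕ) : ℝ) := by push_cast [hP]; ring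
      _ ≤ _ := by exact_mod_cast hnat
  have hrpow : (n.choose i : ℝ) * P ^ (1+γ) ≤ (((n+1).factorial : ℝ)) ^ (1+γ) := by
    have e1 : P ^ (1+γ) = P * P ^ γ := by
      rw [Real.rpow_add hPpos, Real.rpow_one]
    have e2 : (((n+1).factorial : ℝ)) ^ (1+γ)
        = ((n+1).factorial : ℝ) * (((n+1).factorial : ℝ)) ^ γ := by
      rw [Real.rpow_add (by positivity), Real.rpow_one]
    rw [e1, e2, ← mul_assoc]
    refine mul_le_mul hfact1 (Real.rpow_le_rpow hPpos.le hfact2 hγ) (by positivity) (by positivity)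
  have hPsplit : (((i+1).factorial:ℝ))^(1+γ) * (((n-i).factorial:ℝ))^(1+γ) = P ^ (1+γ) := by
    rw [hP, Real.mul_rpow (by positivity) (by positivity)]
  have hMpow : M^(i-1) * M^(n-i-2) * σ^2 ≤ M^(n-1) := by
    have he : M^(i-1) * M^(n-i-2) = M^(n-3) := by
      rw [← pow_add]; congr 1; omega
    have he2 : M^(n-3) * M^2 = M^(n-1) := by
      rw [← pow_add]; congr 1; omega
    calc M^(i-1) * M^(n-i-2) * σ^2 ≤ M^(n-3) * M^2 := by
          rw [he]
          refine mul_le_mul_of_nonneg_left ?_ (by positivity)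
          nlinarith
      _ = M^(n-1) := he2
  have hexp : (2*M)^(i-1) = 2^(i-1) * M^(i-1) := mul_pow 2 M (i-1)
  calc (n.choose i : ℝ) * ((((i+1).factorial:ℝ))^(1+γ) * (2*M)^(i-1) * σ^2)
        * ((((n-i).factorial:ℝ))^(1+γ) * M^(n-i-2) * σ^2)
      = ((n.choose i : ℝ) * P^(1+γ)) * (M^(i-1) * M^(n-i-2) * σ^2) * σ^2 * 2^(i-1) := by
        rw [← hPsplit] at *; rw [hexp]; ring
    _ ≤ (((n+1).factorial : ℝ))^(1+γ) * M^(n-1) * σ^2 * 2^(i-1) := by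
        have h3 : ((n.choose i : ℝ) * P^(1+γ)) * (M^(i-1) * M^(n-i-2) * σ^2)
            ≤ (((n+1).factorial : ℝ))^(1+γ) * M^(n-1) := by
          refine mul_le_mul hrpow hMpow (by positivity) (by positivity)
        calc ((n.choose i : ℝ) * P^(1+γ)) * (M^(i-1) * M^(n-i-2) * σ^2) * σ^2 * 2^(i-1)
            ≤ ((((n+1).factorial : ℝ))^(1+γ) * M^(n-1)) * σ^2 * 2^(i-1) := by
              refine mul_le_mul_of_nonneg_right (mul_le_mul_of_nonneg_right h3 (by positivity))
                (by positivity)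
          _ = _ := by ring

lemma cumulant_rec_bound (γ σ M : ℝ) (hγ : 0 ≤ γ) (hσ : 0 < σ) (hσM : σ ≤ M)
    (m Γ : ℕ → ℝ) (hm0 : m 0 = 1) (hm1 : m 1 = 0) (hΓ1 : Γ 1 = 0)
    (hmb : ∀ k, 2 ≤ k → |m k| ≤ ((k.factorial:ℝ))^(1+γ) * M^(k-2) * σ^2)
    (hrec : ∀ n : ℕ, 1 ≤ n →
      m (n+1) = ∑ i ∈ range (n+1), (n.choose i : ℝ) * Γ (i+1) * m (n-i)) :
    ∀ j, 2 ≤ j → |Γ j| ≤ ((j.factorial:ℝ))^(1+γ) * (2*M)^(j-2) * σ^2 := by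
  have hM : 0 < M := hσ.trans_le hσM
  intro j
  induction j using Nat.strong_induction_on with
  | _ j IH =>
    intro hj
    by_cases hj2 : j = 2
    · subst hj2
      have h2 : m 2 = Γ 2 := by
        have := hrec 1 le_rfl
        rw [this]
        rw [Finset.sum_range_succ, Finset.sum_range_succ, Finset.sum_range_zero]
        simp [hΓ1, hm0, hm1]
      rw [← h2]
      have := hmb 2 le_rfl
      simpa using this
    · have hj3 : 3 ≤ j := by omega
      set n := j - 1 with hn
      have hjn : j = n + 1 := by omega
      have hn2 : 2 ≤ n := by omega
      have hrecn := hrec n (by omega)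
      rw [Finset.sum_range_succ, Nat.choose_self, Nat.sub_self, hm0] at hrecn
      have hΓj : Γ j = m j - ∑ i ∈ range n, (n.choose i : ℝ) * Γ (i+1) * m (n-i) := by
        rw [hjn] at *
        rw [hrecn]; push_cast; ring
      set D : ℝ := ((j.factorial:ℝ))^(1+γ) * M^(j-2) * σ^2 with hD
      have hDpos : 0 < D := by positivity
      have hterm : ∀ i ∈ range n, |(n.choose i : ℝ) * Γ (i+1) * m (n-i)|
          ≤ D * (if i = 0 then 0 else 2^(i-1)) := by
        intro i hi
        rw [Finset.mem_range] at hi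
        by_cases hi0 : i = 0
        · subst hi0; simp [hΓ1]
        · rw [if_neg hi0]
          by_cases hin : i + 2 ≤ n
          · have hΓb := IH (i+1) (by omega) (by omega)
            have hmbnd := hmb (n-i) (by omega)
            have h1 : |(n.choose i : ℝ) * Γ (i+1) * m (n-i)|
                = (n.choose i : ℝ) * |Γ (i+1)| * |m (n-i)| := by
              rw [abs_mul, abs_mul, Nat.abs_cast]
            rw [h1]
            have h2 : (n.choose i : ℝ) * |Γ (i+1)| * |m (n-i)|
                ≤ (n.choose i : ℝ) * ((((i+1).factorial:ℝ))^(1+γ) * (2*M)^(i+1-2) * σ^2)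
                  * ((((n-i).factorial:ℝ))^(1+γ) * M^(n-i-2) * σ^2) := by
              refine mul_le_mul (mul_le_mul_of_nonneg_left hΓb (by positivity)) hmbnd
                (abs_nonneg _) ?_
              positivity
            refine h2.trans ?_
            have hi1 : i + 1 - 2 = i - 1 := by omega
            rw [hi1, hD, hjn]
            have hj2' : n + 1 - 2 = n - 1 := by omega
            rw [hj2']
            exact term_ineq γ M σ hγ hσ hσM n i (by omega) hin
          · have : n - i = 1 := by omega
            rw [this, hm1]
            simp [hDpos.le]
      have hsum : |∑ i ∈ range n, (n.choose i : ℝ) * Γ (i+1) * m (n-i)|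
          ≤ D * (2^(n-1) - 1) := by
        refine (Finset.abs_sum_le_sum_abs _ _).trans ?_
        refine (Finset.sum_le_sum hterm).trans ?_
        rw [← Finset.mul_sum]
        refine mul_le_mul_of_nonneg_left ?_ hDpos.le
        have hsv : ∑ i ∈ range n, (if i = 0 then (0:ℝ) else 2^(i-1))
            = ∑ k ∈ range (n-1), (2:ℝ)^k := by
          have hnn : n = (n-1) + 1 := by omega
          rw [hnn, Finset.sum_range_succ']
          simp
        rw [hsv]
        have := geom_sum_eq (by norm_num : (2:ℝ) ≠ 1) (n-1)
        rw [this]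
        norm_num
      have hmj := hmb j (by omega)
      have habs : |Γ j| ≤ |m j| + |∑ i ∈ range n, (n.choose i : ℝ) * Γ (i+1) * m (n-i)| := by
        rw [hΓj]; exact (abs_sub _ _).trans (by rfl)
      have hfinal : |Γ j| ≤ D + D * (2^(n-1) - 1) :=
        habs.trans (add_le_add hmj hsum)
      have hpow : D + D * (2^(n-1) - 1) = D * 2^(n-1) := by ring
      rw [hpow] at hfinal
      refine hfinal.trans_eq ?_
      rw [hD]
      have h1 : (2*M)^(j-2) = 2^(j-2) * M^(j-2) := mul_pow 2 M (j-2)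
      have h2 : n - 1 = j - 2 := by omega
      rw [h1, h2]; ring
/-- The `j`-th cumulant of a real random variable `X`, defined as the `j`-th derivative
at `0` of the cumulant generating function `t ↦ log E[exp (t X)]`. -/
noncomputable def cumulant {Ω : Type*} [MeasurableSpace Ω] (X : Ω → ℝ) (μ : Measure Ω)
    (j : ℕ) : ℝ :=
  iteratedDeriv j (fun t => cgf X μ t) 0

theorem cumulant_bound_of_bernstein {Ω : Type*} [MeasurableSpace Ω]
    (μ : Measure Ω) [IsProbabilityMeasure μ] (X : Ω → ℝ)
    (σ γ K : ℝ) (hσ : 0 < σ) (hγ : 0 ≤ γ) (hK : 0 < K)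
    (hInt : ∀ j : ℕ, Integrable (fun ω => X ω ^ j) μ)
    (hmean : ∫ ω, X ω ∂μ = 0) (hvar : ∫ ω, X ω ^ 2 ∂μ = σ ^ 2)
    (hmom : ∀ j : ℕ, 3 ≤ j →
      |∫ ω, X ω ^ j ∂μ| ≤ (j.factorial : ℝ) ^ (1 + γ) * K ^ (j - 2) * σ ^ 2) :
    ∀ j : ℕ, 3 ≤ j →
      |cumulant X μ j| ≤ (j.factorial : ℝ) ^ (1 + γ) * (2 * max K σ) ^ (j - 2) * σ ^ 2 := by
  have hXint : Integrable X μ := by simpa using hInt 1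
  have hXm : AEMeasurable X μ := hXint.aemeasurable
  have hMpos : 0 < max K σ := lt_max_of_lt_left hK
  have hRHS : ∀ j : ℕ, 0 ≤ (j.factorial : ℝ) ^ (1 + γ) * (2 * max K σ) ^ (j - 2) * σ ^ 2 := by
    intro j
    have h1 : (0:ℝ) < 2 * max K σ := by linarith
    positivity
  set f : ℝ → ℝ := fun t => cgf X μ t with hf
  by_cases hpos : ∃ t : ℝ, 0 < t ∧ Integrable (fun ω => exp (t * X ω)) μ
  · by_cases hneg : ∃ t : ℝ, t < 0 ∧ Integrable (fun ω => exp (t * X ω)) μ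
    · -- generic case
      obtain ⟨b, hb0, hbInt⟩ := hpos
      obtain ⟨a, ha0, haInt⟩ := hneg
      set s : Set ℝ := Ioo a b with hsdef
      have hs : IsOpen s := isOpen_Ioo
      have h0s : (0:ℝ) ∈ s := ⟨ha0, hb0⟩
      set A : ℕ → ℝ → ℝ := fun n t => ∫ ω, X ω ^ n * exp (t * X ω) ∂μ with hA
      have hd : ∀ n, ∀ x ∈ s, HasDerivAt (A n) (A (n+1) x) x := fun n x hx =>
        hasDerivAt_int_pow_mul_exp hXm haInt hbInt n hx.1 hx.2
      have hA0mgf : A 0 = fun t => mgf X μ t := by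
        funext t; simp [hA, mgf]
      have hA0pos : ∀ t ∈ s, 0 < A 0 t := by
        intro t ht
        rw [hA0mgf]
        refine mgf_pos ?_
        have := integrable_pow_mul_exp hXm haInt hbInt 0 ht.1 ht.2
        simpa using this
      have hcgf_deriv : ∀ t ∈ s, HasDerivAt f (A 1 t / A 0 t) t := by
        intro t ht
        have hder : HasDerivAt (A 0) (A 1 t) t := hd 0 t ht
        have hlog := hder.log (ne_of_gt (hA0pos t ht))
        have hfeq : f = fun u => Real.log (A 0 u) := by
          funext u
          rw [hf, hA0mgf]
          rfl
        rw [hfeq]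
        exact hlog
      set B : ℝ → ℝ := deriv f with hB
      have hBs : Set.EqOn B (fun t => A 1 t / A 0 t) s := fun t ht =>
        (hcgf_deriv t ht).deriv
      have hSDA : ∀ k, SD s (A k) := fun k => sd_system hs hd k
      have hSDQ : SD s (fun t => A 1 t / A 0 t) := by
        refine sd_of_contDiffOn hs ?_
        exact (contDiffOn_system hs hd 1).div (contDiffOn_system hs hd 0)
          (fun t ht => ne_of_gt (hA0pos t ht))
      have hSDB : SD s B := sd_congr hs hBs hSDQ
      have hmulEq : Set.EqOn (fun t => B t * A 0 t) (A 1) s := by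
        intro t ht
        simp only
        rw [hBs ht]
        exact div_mul_cancel₀ _ (ne_of_gt (hA0pos t ht))
      -- moments
      set m : ℕ → ℝ := fun k => ∫ ω, X ω ^ k ∂μ with hm
      have hAm : ∀ k, A k 0 = m k := by
        intro k; simp [hA, hm]
      have hitA : ∀ n k : ℕ, iteratedDeriv n (A k) 0 = A (n+k) 0 := fun n k =>
        iteratedDeriv_system hs hd n k 0 h0s
      have hΓB : ∀ i : ℕ, iteratedDeriv i B 0 = cumulant X μ (i+1) := by
        intro i
        rw [hB, ← iteratedDeriv_succ']
        rfl
      have hrec : ∀ n : ℕ, 1 ≤ n →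
          m (n+1) = ∑ i ∈ range (n+1),
            (n.choose i : ℝ) * cumulant X μ (i+1) * m (n-i) := by
        intro n _
        have e1 : m (n+1) = iteratedDeriv n (A 1) 0 := by
          rw [hitA n 1, hAm]
        have e2 : iteratedDeriv n (A 1) 0 = iteratedDeriv n (fun t => B t * A 0 t) 0 := by
          refine (Filter.EventuallyEq.iteratedDeriv_eq n ?_).symm
          exact eventually_of_mem (hs.mem_nhds h0s) (fun y hy => hmulEq hy)
        have e3 := sd_leibniz hs hSDB (hSDA 0) n 0 h0s
        rw [e1, e2, e3]
        refine Finset.sum_congr rfl (fun i hi => ?_)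
        rw [hΓB i, hitA (n-i) 0]
        rw [Nat.add_zero, hAm]
        ring
      -- facts about low moments and first cumulant
      have hm0 : m 0 = 1 := by simp [hm]
      have hm1 : m 1 = 0 := by simpa [hm] using hmean
      have hΓ1 : cumulant X μ 1 = 0 := by
        have h1 := (hcgf_deriv 0 h0s).deriv
        have e : cumulant X μ 1 = iteratedDeriv 1 f 0 := rfl
        rw [e, iteratedDeriv_one, h1, hAm 1, hAm 0, hm0, hm1]
        simp
      have hmb : ∀ k, 2 ≤ k → |m k| ≤ ((k.factorial:ℝ))^(1+γ) * (max K σ)^(k-2) * σ^2 := by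
        intro k hk
        rcases eq_or_lt_of_le hk with rfl | hk3
        · have : m 2 = σ ^ 2 := by simpa [hm] using hvar
          rw [this, abs_of_pos (by positivity)]
          have h1 : (1:ℝ) ≤ ((Nat.factorial 2 : ℕ):ℝ) ^ (1+γ) := by
            refine Real.one_le_rpow ?_ (by linarith)
            norm_num [Nat.factorial]
          have h2 : ((2:ℕ) - 2 : ℕ) = 0 := rfl
          rw [h2, pow_zero, mul_one]
          nlinarith [sq_nonneg σ]
        · have hk3' : 3 ≤ k := hk3
          refine (hmom k hk3').trans ?_
          have : K ^ (k-2) ≤ (max K σ) ^ (k-2) :=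
            pow_le_pow_left₀ hK.le (le_max_left K σ) _
          have hfp : (0:ℝ) ≤ ((k.factorial:ℝ))^(1+γ) := by positivity
          nlinarith [sq_nonneg σ, mul_le_mul_of_nonneg_left this hfp]
      have := cumulant_rec_bound γ σ (max K σ) hγ hσ (le_max_right K σ)
        m (fun k => cumulant X μ k) hm0 hm1 hΓ1 hmb hrec
      intro j hj
      exact this j (by omega)
    · -- no negative integrability: cgf vanishes on the left
      push_neg at hneg
      intro j hj
      have hvan : ∀ x : ℝ, 0 ≤ x → f (-x) = 0 := by
        intro x hx
        rcases eq_or_lt_of_le hx with rfl | hx'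
        · simp [hf, cgf_zero]
        · exact cgf_undef (by
            intro hIntx
            exact absurd hIntx (by
              have := hneg (-x) (by linarith)
              simpa using this))
      have h0 := iteratedDeriv_zero_of_Ici (f := fun t => f (-t)) hvan j 0 le_rfl
      rw [iteratedDeriv_comp_neg] at h0
      simp only [neg_zero, smul_eq_mul] at h0
      have : iteratedDeriv j f 0 = 0 := by
        rcases mul_eq_zero.1 h0 with h | h
        · exact absurd h (pow_ne_zero j (by norm_num))
        · exact h
      have e : cumulant X μ j = iteratedDeriv j f 0 := rfl
      rw [e, this, abs_zero]
      exact hRHS j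
  · -- no positive integrability: cgf vanishes on the right
    push_neg at hpos
    intro j hj
    have hvan : ∀ x : ℝ, 0 ≤ x → f x = 0 := by
      intro x hx
      rcases eq_or_lt_of_le hx with rfl | hx'
      · simp [hf, cgf_zero]
      · exact cgf_undef (fun hIntx => absurd hIntx (by
          have := hpos x hx'
          simpa using this))
    have h0 := iteratedDeriv_zero_of_Ici hvan j 0 le_rfl
    have e : cumulant X μ j = iteratedDeriv j f 0 := rfl
    rw [e, h0, abs_zero]
    exact hRHS j
end

section
/- For all j ≥ 3 and any 1 ≤ p(n) ≤ n, Σ_{k=1}^{p(n)} |ψ^(j−1)((k + n − p(n))/2)| ≤ 2^(j+1) (j−1)!. -/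
open Real Filter Finset Topology

/-- The polygamma function of order `j`: the `(j+1)`-st derivative of `log ∘ Γ`. -/
noncomputable def polygamma (j : ℕ) (z : ℝ) : ℝ :=
  iteratedDeriv (j + 1) (fun x => Real.log (Real.Gamma x)) z

namespace PolygammaAux

noncomputable def psi1 (x : ℝ) : ℝ :=
  -Real.eulerMascheroniConstant + ∑' i : ℕ, (((i : ℝ) + 1)⁻¹ - (x + (i : ℝ))⁻¹)

noncomputable def psiq (q : ℕ) (x : ℝ) : ℝ :=
  (-1) ^ q * ((q + 1).factorial : ℝ) * ∑' i : ℕ, ((x + (i : ℝ)) ^ (q + 2))⁻¹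

noncomputable def S1 (N : ℕ) (x : ℝ) : ℝ :=
  Real.log N - ∑ i ∈ range (N + 1), (x + (i : ℝ))⁻¹

noncomputable def Sq (q N : ℕ) (x : ℝ) : ℝ :=
  (-1) ^ q * ((q + 1).factorial : ℝ) * ∑ i ∈ range (N + 1), ((x + (i : ℝ)) ^ (q + 2))⁻¹

lemma hasDerivAt_logGammaSeq (N : ℕ) {x : ℝ} (hx : 0 < x) :
    HasDerivAt (fun y => Real.BohrMollerup.logGammaSeq y N) (S1 N x) x := by
  have h1 : ∀ i ∈ range (N + 1),
      HasDerivAt (fun y : ℝ => Real.log (y + (i : ℝ))) ((x + (i : ℝ))⁻¹) x := by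
    intro i _
    have h := ((hasDerivAt_id x).add_const (i : ℝ)).log (by positivity)
    simpa using h
  have h2 := HasDerivAt.fun_sum h1
  have h3 : HasDerivAt (fun y : ℝ => y * Real.log N + Real.log (N.factorial))
      (Real.log N) x := by
    simpa using ((hasDerivAt_id x).mul_const (Real.log N)).add_const (Real.log (N.factorial))
  have h4 := h3.fun_sub h2
  simpa [Real.BohrMollerup.logGammaSeq, S1, sub_eq_add_neg] using h4

lemma hasDerivAt_S1 (N : ℕ) {x : ℝ} (hx : 0 < x) :
    HasDerivAt (S1 N) (Sq 0 N x) x := by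
  have h1 : ∀ i ∈ range (N + 1),
      HasDerivAt (fun y : ℝ => (y + (i : ℝ))⁻¹) (-(((x + (i : ℝ)) ^ 2)⁻¹)) x := by
    intro i _
    have h := ((hasDerivAt_id x).add_const (i : ℝ)).fun_inv (by positivity)
    convert! h using 1
    simp only [id_eq]
    field_simp
  have h2 := (hasDerivAt_const x (Real.log N)).fun_sub (HasDerivAt.fun_sum h1)
  convert! h2 using 1
  simp [Sq, Finset.sum_neg_distrib]

lemma hasDerivAt_Sq (q N : ℕ) {x : ℝ} (hx : 0 < x) :
    HasDerivAt (Sq q N) (Sq (q + 1) N x) x := by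
  have h1 : ∀ i ∈ range (N + 1),
      HasDerivAt (fun y : ℝ => ((y + (i : ℝ)) ^ (q + 2))⁻¹)
        (-((q : ℝ) + 2) * ((x + (i : ℝ)) ^ (q + 3))⁻¹) x := by
    intro i _
    have hne : (x + (i : ℝ)) ≠ 0 := by positivity
    have h := (((hasDerivAt_id x).add_const (i : ℝ)).fun_pow (q + 2)).fun_inv
      (pow_ne_zero _ hne)
    convert! h using 1
    have hpp : (x + (i:ℝ)) ^ (q + 1) * (x + (i:ℝ)) ^ (q + 3) = ((x + (i:ℝ)) ^ (q + 2)) ^ 2 := by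
      rw [← pow_add, ← pow_mul]
      congr 1
      omega
    simp only [id_eq, show q + 2 - 1 = q + 1 from rfl]
    push_cast
    field_simp
    nlinarith [hpp]
  have h2 := HasDerivAt.const_mul ((-1 : ℝ) ^ q * ((q + 1).factorial : ℝ)) (HasDerivAt.fun_sum h1)
  convert! h2 using 1
  rw [Sq, Finset.mul_sum, Finset.mul_sum]
  refine Finset.sum_congr rfl fun i _ => ?_
  have hf : ((q + 1 + 1).factorial : ℝ) = ((q : ℝ) + 2) * ((q + 1).factorial : ℝ) := by
    rw [Nat.factorial_succ]
    push_cast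
    ring
  rw [hf, pow_succ]
  have he : q + 1 + 2 = q + 3 := by omega
  rw [he]
  ring

lemma summable_inv_pow {a : ℝ} (ha : 0 < a) {k : ℕ} (hk : 2 ≤ k) :
    Summable (fun i : ℕ => ((a + (i : ℝ)) ^ k)⁻¹) := by
  rw [← summable_nat_add_iff 1]
  have hs : Summable (fun i : ℕ => (((i : ℝ) + 1) ^ 2)⁻¹) := by
    have := (summable_nat_add_iff (f := fun n : ℕ => ((n : ℝ) ^ 2)⁻¹) 1).2
      (Real.summable_nat_pow_inv.2 one_lt_two)
    refine this.congr fun i => ?_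
    push_cast
    ring_nf
  refine Summable.of_nonneg_of_le (fun i => by positivity) (fun i => ?_) hs
  have h1 : ((i : ℝ) + 1) ^ 2 ≤ ((i : ℝ) + 1) ^ k :=
    pow_le_pow_right₀ (le_add_of_nonneg_left (Nat.cast_nonneg i)) hk
  have h2 : ((i : ℝ) + 1) ^ k ≤ (a + ((i : ℕ) + 1 : ℕ) : ℝ) ^ k := by
    apply pow_le_pow_left₀ (by positivity)
    push_cast
    linarith
  exact inv_anti₀ (by positivity) (h1.trans h2)

lemma tuo_shift {F : ℕ → ℝ → ℝ} {f : ℝ → ℝ} {s : Set ℝ}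
    (h : TendstoUniformlyOn F f atTop s) :
    TendstoUniformlyOn (fun N => F (N + 1)) f atTop s :=
  fun u hu => (tendsto_add_atTop_nat 1).eventually (h u hu)

lemma tuo_Sq (q : ℕ) {a b : ℝ} (ha : 0 < a) :
    TendstoUniformlyOn (fun N => Sq q N) (psiq q) atTop (Set.Ioo a b) := by
  have hbound : ∀ (i : ℕ) (x : ℝ), x ∈ Set.Ioo a b →
      ‖(-1 : ℝ) ^ q * ((q + 1).factorial : ℝ) * ((x + (i : ℝ)) ^ (q + 2))⁻¹‖ ≤
        ((q + 1).factorial : ℝ) * ((a + (i : ℝ)) ^ (q + 2))⁻¹ := by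
    intro i x hx
    have hx0 : 0 < x := ha.trans hx.1
    have hxi : (0:ℝ) < x + i := by
      have := Nat.cast_nonneg (α := ℝ) i
      linarith
    rw [norm_mul, norm_mul, norm_pow, norm_neg, norm_one, one_pow, one_mul]
    have h1 : (a + (i : ℝ)) ^ (q + 2) ≤ (x + (i : ℝ)) ^ (q + 2) := by
      apply pow_le_pow_left₀ (by positivity)
      linarith [hx.1]
    have h2 : ‖((x + (i : ℝ)) ^ (q + 2))⁻¹‖ ≤ ((a + (i : ℝ)) ^ (q + 2))⁻¹ := by
      rw [Real.norm_eq_abs, abs_of_nonneg (by positivity)]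
      exact inv_anti₀ (by positivity) h1
    have h3 : ‖((q + 1).factorial : ℝ)‖ = ((q + 1).factorial : ℝ) := by
      rw [Real.norm_eq_abs, Nat.abs_cast]
    rw [h3]
    exact mul_le_mul_of_nonneg_left h2 (by positivity)
  have h := tendstoUniformlyOn_tsum_nat
    ((summable_inv_pow ha (by omega : 2 ≤ q + 2)).mul_left ((q + 1).factorial : ℝ)) hbound
  have h2 := tuo_shift h
  have e1 : (fun N x => ∑ i ∈ range (N + 1),
      (-1 : ℝ) ^ q * ((q + 1).factorial : ℝ) * ((x + (i : ℝ)) ^ (q + 2))⁻¹) = fun N => Sq q N := by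
    funext N x
    rw [Sq, Finset.mul_sum]
  have e2 : (fun x : ℝ => ∑' i : ℕ,
      (-1 : ℝ) ^ q * ((q + 1).factorial : ℝ) * ((x + (i : ℝ)) ^ (q + 2))⁻¹) = psiq q := by
    funext x
    rw [psiq, tsum_mul_left]
  rw [e1, e2] at h2
  exact h2

lemma summable_u {a : ℝ} (ha : 0 < a) :
    Summable (fun i : ℕ => (((i : ℝ) + 1) * (a + (i : ℝ)))⁻¹) := by
  rw [← summable_nat_add_iff 1]
  have hs : Summable (fun i : ℕ => (((i : ℝ) + 1) ^ 2)⁻¹) := by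
    have := (summable_nat_add_iff (f := fun n : ℕ => ((n : ℝ) ^ 2)⁻¹) 1).2
      (Real.summable_nat_pow_inv.2 one_lt_two)
    refine this.congr fun i => ?_
    push_cast
    ring_nf
  refine Summable.of_nonneg_of_le (fun i => by positivity) (fun i => ?_) hs
  have hi : (0:ℝ) ≤ (i : ℝ) := Nat.cast_nonneg i
  refine inv_anti₀ (by positivity) ?_
  push_cast
  nlinarith

lemma harmonic_cast (M : ℕ) :
    ((harmonic M : ℚ) : ℝ) = ∑ i ∈ range M, ((i : ℝ) + 1)⁻¹ := by
  rw [harmonic]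
  push_cast
  rfl

lemma tendsto_const_part :
    Tendsto (fun N : ℕ => Real.log N - ∑ i ∈ range (N + 1), ((i : ℝ) + 1)⁻¹) atTop
      (𝓝 (-Real.eulerMascheroniConstant)) := by
  have h1 : Tendsto (fun N : ℕ => ((harmonic (N + 1) : ℚ) : ℝ) - Real.log ((N : ℝ) + 1)) atTop
      (𝓝 Real.eulerMascheroniConstant) := by
    have h := Real.tendsto_harmonic_sub_log.comp (tendsto_add_atTop_nat 1)
    refine h.congr fun N => ?_
    simp only [Function.comp_apply]
    push_cast
    ring_nf
  have h2 : Tendsto (fun N : ℕ => Real.log ((N : ℝ) + 1) - Real.log (N : ℝ)) atTop (𝓝 0) :=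
    Real.tendsto_log_nat_add_one_sub_log
  have h3 := (h1.add h2).neg
  rw [add_zero] at h3
  refine h3.congr fun N => ?_
  rw [harmonic_cast]
  ring

lemma tuo_S1 {a b : ℝ} (ha : 0 < a) :
    TendstoUniformlyOn (fun N => S1 N) psi1 atTop (Set.Ioo a b) := by
  set g : ℕ → ℝ → ℝ := fun i x => ((i : ℝ) + 1)⁻¹ - (x + (i : ℝ))⁻¹ with hg
  have hbound : ∀ (i : ℕ) (x : ℝ), x ∈ Set.Ioo a b →
      ‖g i x‖ ≤ (|b| + 1) * (((i : ℝ) + 1) * (a + (i : ℝ)))⁻¹ := by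
    intro i x hx
    have hx0 : 0 < x := ha.trans hx.1
    have hi : (0:ℝ) ≤ (i : ℝ) := Nat.cast_nonneg i
    have hxi : (0:ℝ) < x + i := by linarith
    have hai : (0:ℝ) < a + i := by linarith
    have he : g i x = (x - 1) * (((i : ℝ) + 1) * (x + (i : ℝ)))⁻¹ := by
      rw [hg]
      field_simp
      ring
    rw [he, Real.norm_eq_abs, abs_mul, abs_of_nonneg (le_of_lt (by positivity :
      (0:ℝ) < (((i : ℝ) + 1) * (x + (i : ℝ)))⁻¹))]
    have hxb : x ≤ |b| := le_trans hx.2.le (le_abs_self b)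
    have hb1 : |x - 1| ≤ |b| + 1 := by
      rw [abs_le]
      constructor <;> linarith
    have hb2 : (((i : ℝ) + 1) * (x + (i : ℝ)))⁻¹ ≤ (((i : ℝ) + 1) * (a + (i : ℝ)))⁻¹ := by
      apply inv_anti₀ (by positivity)
      have := hx.1
      nlinarith
    apply mul_le_mul hb1 hb2 (by positivity) (by positivity)
  have hseries := tuo_shift (tendstoUniformlyOn_tsum_nat
    ((summable_u ha).mul_left (|b| + 1)) hbound)
  have hconst := tendsto_const_part.tendstoUniformlyOn_const (Set.Ioo a b)
  have h := hconst.add hseries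
  refine TendstoUniformlyOn.congr_right (TendstoUniformlyOn.congr h ?_) ?_
  · filter_upwards with N x hx
    simp only [Pi.add_apply]
    rw [S1, hg, Finset.sum_sub_distrib]
    ring
  · intro x hx
    simp only [Pi.add_apply]
    rw [psi1, hg]

noncomputable def Lad : ℕ → ℝ → ℝ
  | 0 => fun x => Real.log (Real.Gamma x)
  | 1 => psi1
  | (q + 2) => psiq q

lemma hasDerivAt_Lad (m : ℕ) {x : ℝ} (hx : 0 < x) :
    HasDerivAt (Lad m) (Lad (m + 1) x) x := by
  have ha : 0 < x / 2 := by linarith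
  have hab : x ∈ Set.Ioo (x / 2) (x + 1) := ⟨by linarith, by linarith⟩
  have hpos : ∀ y ∈ Set.Ioo (x / 2) (x + 1), 0 < y := fun y hy => ha.trans hy.1
  match m with
  | 0 =>
    exact hasDerivAt_of_tendstoUniformlyOn isOpen_Ioo (tuo_S1 ha)
      (Eventually.of_forall fun N y hy => hasDerivAt_logGammaSeq N (hpos y hy))
      (fun y hy => Real.BohrMollerup.tendsto_log_gamma (hpos y hy)) hab
  | 1 =>
    exact hasDerivAt_of_tendstoUniformlyOn isOpen_Ioo (tuo_Sq 0 ha)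
      (Eventually.of_forall fun N y hy => hasDerivAt_S1 N (hpos y hy))
      (fun y hy => (tuo_S1 ha).tendsto_at hy) hab
  | (q + 2) =>
    exact hasDerivAt_of_tendstoUniformlyOn isOpen_Ioo (tuo_Sq (q + 1) ha)
      (Eventually.of_forall fun N y hy => hasDerivAt_Sq q N (hpos y hy))
      (fun y hy => (tuo_Sq q ha).tendsto_at hy) hab

lemma iteratedDeriv_eq_Lad (m : ℕ) : ∀ {x : ℝ}, 0 < x →
    iteratedDeriv m (fun y => Real.log (Real.Gamma y)) x = Lad m x := by
  induction m with
  | zero =>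
    intro x hx
    simp [Lad, iteratedDeriv_zero]
  | succ m ih =>
    intro x hx
    rw [iteratedDeriv_succ]
    have hev : iteratedDeriv m (fun y => Real.log (Real.Gamma y)) =ᶠ[𝓝 x] Lad m :=
      eventually_of_mem (Ioi_mem_nhds hx) fun y hy => ih hy
    rw [hev.deriv_eq]
    exact (hasDerivAt_Lad m hx).deriv

lemma polygamma_eq (q : ℕ) {z : ℝ} (hz : 0 < z) :
    iteratedDeriv (q + 2) (fun x => Real.log (Real.Gamma x)) z = psiq q z :=
  iteratedDeriv_eq_Lad (q + 2) hz

/-- tail sum with step 2, starting point `c ≥ 2` -/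
lemma Tbound_ge2 (q : ℕ) (hq : 1 ≤ q) {c : ℝ} (hc : 2 ≤ c) :
    ∑' i : ℕ, ((c + 2 * (i : ℝ)) ^ (q + 2))⁻¹ ≤ (2 * c * (c - 1))⁻¹ := by
  apply Real.tsum_le_of_sum_range_le (fun i => by positivity)
  intro N
  set g : ℕ → ℝ := fun i => (c + 2 * (i : ℝ) - 1)⁻¹ with hgdef
  have hterm : ∀ i : ℕ, ((c + 2 * (i : ℝ)) ^ (q + 2))⁻¹ ≤ (2 * c)⁻¹ * (g i - g (i + 1)) := by
    intro i
    have hi : (0:ℝ) ≤ (i : ℝ) := Nat.cast_nonneg i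
    set x : ℝ := c + 2 * (i : ℝ) with hxdef
    have hx2 : 2 ≤ x := by rw [hxdef]; linarith
    have h3 : x ^ 3 ≤ x ^ (q + 2) := pow_le_pow_right₀ (by linarith) (by omega)
    have hkey : c * (x ^ 2 - 1) ≤ x ^ 3 := by nlinarith
    have hpos : (0:ℝ) < c * (x ^ 2 - 1) := by nlinarith
    have h4 : ((c + 2 * (i : ℝ)) ^ (q + 2))⁻¹ ≤ (c * (x ^ 2 - 1))⁻¹ := by
      rw [← hxdef]
      exact inv_anti₀ hpos (hkey.trans h3)
    have h5 : (2 * c)⁻¹ * (g i - g (i + 1)) = (c * (x ^ 2 - 1))⁻¹ := by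
      rw [hgdef]
      simp only [Nat.cast_add, Nat.cast_one]
      have hx1 : x - 1 ≠ 0 := by linarith
      have hx1' : x + 1 ≠ 0 := by linarith
      have e1 : c + 2 * (i : ℝ) - 1 = x - 1 := by rw [hxdef]
      have e2 : c + 2 * ((i : ℝ) + 1) - 1 = x + 1 := by rw [hxdef]; ring
      rw [e1, e2]
      have hc0 : c ≠ 0 := by linarith
      rw [show x ^ 2 - 1 = (x - 1) * (x + 1) by ring]
      field_simp
      ring
    rw [h5.symm] at h4
    exact h4
  calc ∑ i ∈ range N, ((c + 2 * (i : ℝ)) ^ (q + 2))⁻¹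
      ≤ ∑ i ∈ range N, (2 * c)⁻¹ * (g i - g (i + 1)) :=
        Finset.sum_le_sum fun i _ => hterm i
    _ = (2 * c)⁻¹ * (g 0 - g N) := by rw [← Finset.mul_sum, Finset.sum_range_sub' g N]
    _ ≤ (2 * c)⁻¹ * g 0 := by
        have hgN : 0 ≤ g N := by
          rw [hgdef]
          have : (0:ℝ) ≤ (N : ℝ) := Nat.cast_nonneg N
          have : (0:ℝ) ≤ c + 2 * (N:ℝ) - 1 := by linarith
          positivity
        have : (0:ℝ) < (2 * c)⁻¹ := by positivity
        nlinarith
    _ = (2 * c * (c - 1))⁻¹ := by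
        rw [hgdef]
        simp only [Nat.cast_zero, mul_zero, add_zero]
        have hc0 : c ≠ 0 := by linarith
        have hc1 : c - 1 ≠ 0 := by linarith
        field_simp

lemma Tbound_1 (q : ℕ) :
    ∑' i : ℕ, (((1:ℝ) + 2 * (i : ℝ)) ^ (q + 2))⁻¹ ≤ 5 / 4 := by
  apply Real.tsum_le_of_sum_range_le (fun i => by positivity)
  intro N
  match N with
  | 0 => simp; norm_num
  | (M + 1) =>
    rw [Finset.sum_range_succ']
    have h0 : (((1:ℝ) + 2 * ((0:ℕ) : ℝ)) ^ (q + 2))⁻¹ = 1 := by norm_num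
    rw [h0]
    set g : ℕ → ℝ := fun i => ((i : ℝ) + 1)⁻¹ with hgdef
    have hterm : ∀ i : ℕ, (((1:ℝ) + 2 * ((i : ℕ) + 1 : ℕ)) ^ (q + 2))⁻¹ ≤
        (4 : ℝ)⁻¹ * (g i - g (i + 1)) := by
      intro i
      have hi : (0:ℝ) ≤ (i : ℝ) := Nat.cast_nonneg i
      have hb : (1:ℝ) ≤ 2 * (i : ℝ) + 3 := by linarith
      have h2 : ((2 * (i:ℝ) + 3) ^ 2) ≤ (2 * (i:ℝ) + 3) ^ (q + 2) :=
        pow_le_pow_right₀ hb (by omega)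
      have hr : (4:ℝ) * ((i:ℝ) + 1) * ((i:ℝ) + 2) ≤ (2 * (i:ℝ) + 3) ^ 2 := by nlinarith
      have hcast : ((1:ℝ) + 2 * ((i : ℕ) + 1 : ℕ)) = 2 * (i:ℝ) + 3 := by push_cast; ring
      rw [hcast]
      have h4 : ((2 * (i:ℝ) + 3) ^ (q + 2))⁻¹ ≤ ((4:ℝ) * ((i:ℝ) + 1) * ((i:ℝ) + 2))⁻¹ :=
        inv_anti₀ (by positivity) (hr.trans h2)
      have h5 : (4 : ℝ)⁻¹ * (g i - g (i + 1)) = ((4:ℝ) * ((i:ℝ) + 1) * ((i:ℝ) + 2))⁻¹ := by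
        rw [hgdef]
        simp only [Nat.cast_add, Nat.cast_one]
        field_simp
        ring
      rw [h5]
      exact h4
    have hsum : ∑ i ∈ range M, (((1:ℝ) + 2 * ((i : ℕ) + 1 : ℕ)) ^ (q + 2))⁻¹ ≤
        (4 : ℝ)⁻¹ * (g 0 - g M) := by
      calc ∑ i ∈ range M, (((1:ℝ) + 2 * ((i : ℕ) + 1 : ℕ)) ^ (q + 2))⁻¹
          ≤ ∑ i ∈ range M, (4 : ℝ)⁻¹ * (g i - g (i + 1)) :=
            Finset.sum_le_sum fun i _ => hterm i
        _ = (4 : ℝ)⁻¹ * (g 0 - g M) := by rw [← Finset.mul_sum, Finset.sum_range_sub' g M]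
    have hg0 : g 0 = 1 := by rw [hgdef]; norm_num
    have hgM : 0 ≤ g M := by rw [hgdef]; positivity
    have h6 : (4 : ℝ)⁻¹ * (g 0 - g M) ≤ 4⁻¹ := by
      rw [hg0]
      nlinarith
    have := hsum.trans h6
    linarith

noncomputable def T (q m : ℕ) : ℝ := ∑' i : ℕ, (((m : ℝ) + 2 * (i : ℝ)) ^ (q + 2))⁻¹

lemma T_nonneg (q m : ℕ) : 0 ≤ T q m := tsum_nonneg fun i => by positivity

lemma abs_psiq_half (q m : ℕ) (hm : 1 ≤ m) :
    |psiq q ((m : ℝ) / 2)| = ((q + 1).factorial : ℝ) * 2 ^ (q + 2) * T q m := by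
  rw [psiq, abs_mul, abs_mul, abs_pow, abs_neg, abs_one, one_pow, one_mul, Nat.abs_cast]
  have htsum : ∑' i : ℕ, (((m:ℝ)/2 + (i:ℝ)) ^ (q + 2))⁻¹ = 2 ^ (q + 2) * T q m := by
    rw [T, ← tsum_mul_left]
    apply tsum_congr
    intro i
    have h : ((m:ℝ)/2 + (i:ℝ)) = ((m:ℝ) + 2 * i) / 2 := by ring
    rw [h, div_pow, inv_div, div_eq_mul_inv]
  rw [abs_of_nonneg (tsum_nonneg fun i => by positivity), htsum]
  ring

lemma sum_T_le (q : ℕ) (hq : 1 ≤ q) (n : ℕ) (hn : 1 ≤ n) :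
    ∑ m ∈ Icc 1 n, T q m ≤ 7 / 4 - (2 * (n : ℝ))⁻¹ := by
  induction n, hn using Nat.le_induction with
  | base =>
    rw [Finset.Icc_self, Finset.sum_singleton]
    have hT : T q 1 ≤ 5 / 4 := by
      rw [T]
      have := Tbound_1 q
      simpa using this
    norm_num
    linarith
  | succ n hn ih =>
    rw [Finset.sum_Icc_succ_top (by omega : 1 ≤ n + 1)]
    have hn1 : (1:ℝ) ≤ (n : ℝ) := by exact_mod_cast hn
    have hTn : T q (n + 1) ≤ (2 * ((n:ℝ) + 1) * ((n:ℝ) + 1 - 1))⁻¹ := by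
      rw [T]
      have h := Tbound_ge2 q hq (c := (n:ℝ) + 1) (by linarith)
      refine le_trans (le_of_eq (tsum_congr fun i => ?_)) h
      push_cast
      ring_nf
    have he : (2 * ((n:ℝ) + 1) * ((n:ℝ) + 1 - 1))⁻¹ = (2 * (n:ℝ))⁻¹ - (2 * ((n:ℝ) + 1))⁻¹ := by
      have h1 : (n:ℝ) ≠ 0 := by linarith
      have h2 : (n:ℝ) + 1 ≠ 0 := by linarith
      field_simp
      ring_nf
      exact mul_inv_cancel₀ h1
    have hcast : ((n + 1 : ℕ) : ℝ) = (n : ℝ) + 1 := by push_cast; ring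
    rw [hcast]
    linarith

end PolygammaAux

theorem polygamma_sum_bound_universal (n p j : ℕ) (hj : 3 ≤ j) (hp : 1 ≤ p) (hpn : p ≤ n) :
    ∑ k ∈ Finset.Icc 1 p, |polygamma (j - 1) (((k : ℝ) + n - p) / 2)| ≤
      2 ^ (j + 1) * ((j - 1).factorial : ℝ) := by
  obtain ⟨q, hq1, rfl⟩ : ∃ q, 1 ≤ q ∧ j = q + 2 := ⟨j - 2, by omega, by omega⟩
  have hn1 : 1 ≤ n := le_trans hp hpn
  set d := n - p with hd
  have hterm : ∀ k ∈ Finset.Icc 1 p,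
      |polygamma (q + 2 - 1) (((k : ℝ) + n - p) / 2)| =
        ((q + 1).factorial : ℝ) * 2 ^ (q + 2) * PolygammaAux.T q (k + d) := by
    intro k hk
    have hk1 : 1 ≤ k := (Finset.mem_Icc.mp hk).1
    have hcast : ((k : ℝ) + n - p) = ((k + d : ℕ) : ℝ) := by
      rw [hd]
      push_cast [Nat.cast_sub hpn]
      ring
    have hz : (0:ℝ) < ((k + d : ℕ) : ℝ) / 2 := by
      have h1 : 1 ≤ k + d := by omega
      have h2 : (1:ℝ) ≤ ((k + d : ℕ) : ℝ) := by exact_mod_cast h1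
      linarith
    rw [hcast]
    show |iteratedDeriv (q + 2 - 1 + 1) (fun x => Real.log (Real.Gamma x)) _| = _
    rw [show q + 2 - 1 + 1 = q + 2 from rfl, PolygammaAux.polygamma_eq q hz,
      PolygammaAux.abs_psiq_half q (k + d) (by omega)]
  rw [Finset.sum_congr rfl hterm, ← Finset.mul_sum]
  have hmap : ∑ k ∈ Finset.Icc 1 p, PolygammaAux.T q (k + d) =
      ∑ m ∈ Finset.Icc (1 + d) (p + d), PolygammaAux.T q m := by
    rw [← Finset.map_add_right_Icc, Finset.sum_map]
    simp [addRightEmbedding]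
  have hsub : ∑ k ∈ Finset.Icc 1 p, PolygammaAux.T q (k + d) ≤
      ∑ m ∈ Finset.Icc 1 n, PolygammaAux.T q m := by
    rw [hmap]
    apply Finset.sum_le_sum_of_subset_of_nonneg
    · exact Finset.Icc_subset_Icc (by omega) (by omega)
    · exact fun m _ _ => PolygammaAux.T_nonneg q m
  have hfin : ∑ k ∈ Finset.Icc 1 p, PolygammaAux.T q (k + d) ≤ 2 := by
    have hsum := PolygammaAux.sum_T_le q hq1 n hn1
    have hpos : (0:ℝ) ≤ (2 * (n : ℝ))⁻¹ := by positivity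
    linarith [hsub.trans hsum]
  have hC : (0:ℝ) ≤ ((q + 1).factorial : ℝ) * 2 ^ (q + 2) := by positivity
  calc ((q + 1).factorial : ℝ) * 2 ^ (q + 2) * ∑ k ∈ Finset.Icc 1 p, PolygammaAux.T q (k + d)
      ≤ ((q + 1).factorial : ℝ) * 2 ^ (q + 2) * 2 := by
        exact mul_le_mul_of_nonneg_left hfin hC
    _ = 2 ^ (q + 2 + 1) * ((q + 2 - 1).factorial : ℝ) := by
        rw [show q + 2 - 1 = q + 1 from rfl, pow_succ]
        ring
end

section
/- Let Z be a random variable whose cumulant generating function is log E[e^{zZ}] = Σ_{k=1}^n [log Γ(βk/2 + z) − log Γ(βk/2)] (Ginibre-type structure, up to the first cumulant) with β ∈ {1, 2, 4}. Then for j ≥ 2, Γ_j(Z) = Σ_{k=1}^n ψ^(j−1)(βk/2), and for β = 2 and j ≥ 3 one has |Γ_j(Z)| ≤ (j−2)! ζ(j−1) + (j−1)! ζ(j), independent of n. -/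
open MeasureTheory ProbabilityTheory

/-- Real Riemann zeta values `ζ(s) = ∑_{k ≥ 1} 1/k^s`. -/
noncomputable def zetaR (s : ℕ) : ℝ := ∑' k : ℕ, 1 / ((k : ℝ) + 1) ^ s


open Real Filter Topology Set

noncomputable def LG : ℝ → ℝ := fun x => Real.log (Real.Gamma x)


lemma contDiffAt_Gamma_real {x : ℝ} (hx : 0 < x) : ContDiffAt ℝ ⊤ Real.Gamma x := by
  have hU : IsOpen {s : ℂ | 0 < s.re} := isOpen_lt continuous_const Complex.continuous_re
  have hdiff : DifferentiableOn ℂ Complex.Gamma {s : ℂ | 0 < s.re} := by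
    intro s hs
    refine (Complex.differentiableAt_Gamma s fun m => ?_).differentiableWithinAt
    intro h
    rw [h] at hs
    simp only [mem_setOf_eq, Complex.neg_re, Complex.natCast_re] at hs
    have : (0:ℝ) ≤ m := Nat.cast_nonneg m
    linarith
  have han : AnalyticOnNhd ℂ Complex.Gamma {s : ℂ | 0 < s.re} := hdiff.analyticOnNhd hU
  have hx' : AnalyticAt ℂ Complex.Gamma (x : ℂ) := han _ (by simpa using hx)
  have h1 : ContDiffAt ℂ ⊤ Complex.Gamma (x : ℂ) := hx'.contDiffAt
  have h2 : ContDiffAt ℝ ⊤ Complex.Gamma (x : ℂ) := h1.restrict_scalars ℝ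
  have h3 : ContDiffAt ℝ ⊤ (fun y : ℝ => (Complex.Gamma (y : ℂ)).re) x := by
    exact Complex.reCLM.contDiff.contDiffAt.comp x (h2.comp x Complex.ofRealCLM.contDiff.contDiffAt)
  have : (fun y : ℝ => (Complex.Gamma (y : ℂ)).re) = Real.Gamma := by
    funext y; rw [Complex.Gamma_ofReal]; simp
  rwa [this] at h3

lemma contDiffAt_LG {x : ℝ} (hx : 0 < x) : ContDiffAt ℝ ⊤ LG x :=
  (contDiffAt_Gamma_real hx).log (Real.Gamma_pos_of_pos hx).ne'

lemma contDiffOn_iter_LG (j : ℕ) : ContDiffOn ℝ ⊤ (iteratedDeriv j LG) (Ioi 0) := by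
  induction j with
  | zero => exact fun x hx => (contDiffAt_LG hx).contDiffWithinAt
  | succ j ih =>
    have : iteratedDeriv (j+1) LG = deriv (iteratedDeriv j LG) := by
      funext y; rw [iteratedDeriv_succ]
    rw [this]
    exact ih.deriv_of_isOpen isOpen_Ioi (le_refl (⊤ : WithTop ℕ∞))

lemma differentiableAt_iter_LG (j : ℕ) {x : ℝ} (hx : 0 < x) :
    DifferentiableAt ℝ (iteratedDeriv j LG) x :=
  (((contDiffOn_iter_LG j).differentiableOn (by simp)) x hx).differentiableAt
    (Ioi_mem_nhds hx)

/-- Part-1 core: iterated derivatives of a finite sum of shifted `LG`s minus constants. -/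
lemma iteratedDeriv_sum_shift {n : ℕ} (c d : ℕ → ℝ) (a : ℝ) (ha : 0 < a)
    (hc : ∀ k ∈ Finset.Icc 1 n, a ≤ c k) :
    ∀ j : ℕ, 1 ≤ j → ∀ z ∈ Ioo (-a) a,
      iteratedDeriv j (fun z => ∑ k ∈ Finset.Icc 1 n, (LG (c k + z) - d k)) z
        = ∑ k ∈ Finset.Icc 1 n, iteratedDeriv j LG (c k + z) := by
  intro j hj
  induction j, hj using Nat.le_induction with
  | base =>
    intro z hz
    rw [iteratedDeriv_one]
    have hdiff : ∀ k ∈ Finset.Icc 1 n, DifferentiableAt ℝ (fun z => LG (c k + z) - d k) z := by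
      intro k hk
      have h1 : DifferentiableAt ℝ LG (c k + z) :=
        (differentiableAt_iter_LG 0 (by have := hc k hk; cases hz; linarith)).congr_of_eventuallyEq
          (by filter_upwards with y; simp [iteratedDeriv_zero])
      exact ((h1.comp z (by fun_prop)).sub_const _)
    rw [deriv_fun_sum hdiff]
    refine Finset.sum_congr rfl fun k hk => ?_
    rw [deriv_sub_const, deriv_comp_const_add, iteratedDeriv_one]
  | succ j hj ih =>
    intro z hz
    rw [iteratedDeriv_succ]
    have heq : (iteratedDeriv j (fun z => ∑ k ∈ Finset.Icc 1 n, (LG (c k + z) - d k)))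
        =ᶠ[𝓝 z] (fun z => ∑ k ∈ Finset.Icc 1 n, iteratedDeriv j LG (c k + z)) := by
      filter_upwards [isOpen_Ioo.mem_nhds hz] with y hy
      exact ih y hy
    rw [heq.deriv_eq]
    have hdiff : ∀ k ∈ Finset.Icc 1 n,
        DifferentiableAt ℝ (fun z => iteratedDeriv j LG (c k + z)) z := by
      intro k hk
      exact (differentiableAt_iter_LG j (by have := hc k hk; cases hz; linarith)).comp z
        (by fun_prop)
    rw [deriv_fun_sum hdiff]
    refine Finset.sum_congr rfl fun k hk => ?_
    rw [deriv_comp_const_add, ← iteratedDeriv_succ]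



noncomputable def psiR (x : ℝ) : ℝ :=
  -Real.eulerMascheroniConstant - 1/x + ∑' k : ℕ, (1/((k:ℝ)+1) - 1/(x+(k:ℝ)+1))

lemma summable_one_div_add_one_pow {p : ℕ} (hp : 2 ≤ p) :
    Summable (fun k : ℕ => 1/((k:ℝ)+1)^p) := by
  have h : Summable (fun n : ℕ => 1/(n:ℝ)^p) := summable_one_div_nat_pow.2 (by omega)
  have := (summable_nat_add_iff 1).2 h
  refine this.congr fun k => ?_
  push_cast
  ring

lemma summable_inv_shift_pow {x : ℝ} (hx : 0 < x) {p : ℕ} (hp : 2 ≤ p) :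
    Summable (fun i : ℕ => ((x + (i:ℝ))^p)⁻¹) := by
  refine Summable.of_nonneg_of_le (fun i => by positivity)
    (fun i => ?_) (((summable_one_div_add_one_pow hp).mul_left ((min x 1)^p)⁻¹))
  have h1 : (0:ℝ) < min x 1 := lt_min hx one_pos
  have h2 : min x 1 * ((i:ℝ)+1) ≤ x + i := by
    rcases min_cases x 1 with ⟨h, hx1⟩ | ⟨h, hx1⟩ <;> rw [h] <;> nlinarith [Nat.cast_nonneg (α := ℝ) i]
  have h3 : (0:ℝ) < x + i := by positivity
  have h4 : (min x 1 * ((i:ℝ)+1))^p ≤ (x + i)^p := by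
    apply pow_le_pow_left₀ (by positivity) h2
  rw [mul_pow] at h4
  rw [one_div, ← mul_inv]
  exact inv_anti₀ (by positivity) (by simpa using h4)

lemma summable_psi_term {x : ℝ} (hx : 0 < x) :
    Summable (fun k : ℕ => 1/((k:ℝ)+1) - 1/(x+(k:ℝ)+1)) := by
  refine Summable.of_nonneg_of_le (fun k => ?_) (fun k => ?_)
    ((summable_one_div_add_one_pow le_rfl).mul_left x)
  · have h1 : (0:ℝ) < (k:ℝ)+1 := by positivity
    have h2 : ((k:ℝ)+1) ≤ x+(k:ℝ)+1 := by linarith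
    have := one_div_le_one_div_of_le h1 h2
    linarith
  · have h1 : (0:ℝ) < (k:ℝ)+1 := by positivity
    have h2 : (0:ℝ) < x+(k:ℝ)+1 := by linarith
    rw [div_sub_div _ _ h1.ne' h2.ne']
    have hnum : x+(k:ℝ)+1 - ((k:ℝ)+1) = x := by ring
    rw [one_mul, mul_one, hnum]
    rw [div_le_iff₀ (by positivity)]
    have : ((k:ℝ)+1)^2 ≤ ((k:ℝ)+1) * (x+(k:ℝ)+1) := by nlinarith
    calc x = x * ((k:ℝ)+1)^2 * (1/((k:ℝ)+1)^2) := by field_simp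
    _ ≤ x * (((k:ℝ)+1) * (x+(k:ℝ)+1)) * (1/((k:ℝ)+1)^2) := by
        apply mul_le_mul_of_nonneg_right _ (by positivity)
        exact mul_le_mul_of_nonneg_left this (le_of_lt hx)
    _ = x * (1/((k:ℝ)+1)^2) * (((k:ℝ)+1) * (x+(k:ℝ)+1)) := by ring

lemma hasDerivAt_LG {x : ℝ} (hx : 0 < x) : HasDerivAt LG (psiR x) x := by
  set s : Set ℝ := Ioo (x/2) (x+1) with hs
  have hso : IsOpen s := isOpen_Ioo
  have hxs : x ∈ s := ⟨by linarith, by linarith⟩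
  have hpos : ∀ y ∈ s, 0 < y := fun y hy => lt_trans (by linarith) hy.1
  -- the approximating functions and their derivatives
  set f : ℕ → ℝ → ℝ := fun N y =>
    y * Real.log N + Real.log (Nat.factorial N : ℝ) - ∑ j ∈ Finset.range (N+1), Real.log (y + j) with hf
  set f' : ℕ → ℝ → ℝ := fun N y =>
    Real.log N - ∑ j ∈ Finset.range (N+1), 1/(y + j) with hf'
  have hderiv : ∀ N : ℕ, ∀ y ∈ s, HasDerivAt (f N) (f' N y) y := by
    intro N y hy
    have h1 : HasDerivAt (fun y : ℝ => y * Real.log N) (Real.log N) y := by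
      simpa using (hasDerivAt_id y).mul_const (Real.log N)
    have h2 : HasDerivAt (fun y : ℝ => ∑ j ∈ Finset.range (N+1), Real.log (y + j))
        (∑ j ∈ Finset.range (N+1), 1/(y + j)) y := by
      refine HasDerivAt.fun_sum fun j _ => ?_
      have hyj : y + (j:ℝ) ≠ 0 := by have := hpos y hy; positivity
      simpa using ((hasDerivAt_id y).add_const (j:ℝ)).log hyj
    simpa [hf, hf'] using (h1.add_const (Real.log (Nat.factorial N : ℝ))).fun_sub h2
  -- pointwise convergence to LG
  have hptws : ∀ y ∈ s, Tendsto (fun N => f N y) atTop (𝓝 (LG y)) := by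
    intro y hy
    have hy0 := hpos y hy
    have hG : Tendsto (fun N => Real.GammaSeq y N) atTop (𝓝 (Real.Gamma y)) :=
      Real.GammaSeq_tendsto_Gamma y
    have hGpos : 0 < Real.Gamma y := Real.Gamma_pos_of_pos hy0
    have hlog : Tendsto (fun N => Real.log (Real.GammaSeq y N)) atTop (𝓝 (LG y)) :=
      ((Real.continuousAt_log hGpos.ne').tendsto.comp hG)
    refine hlog.congr' ?_
    filter_upwards [eventually_ge_atTop 1] with N hN
    have hNpos : (0:ℝ) < N := by exact_mod_cast hN
    have hprod : (0:ℝ) < ∏ j ∈ Finset.range (N+1), (y + j) := by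
      apply Finset.prod_pos; intro j _; positivity
    rw [Real.GammaSeq]
    rw [Real.log_div (by positivity) hprod.ne', Real.log_mul (by positivity) (by positivity),
      Real.log_rpow hNpos, Real.log_prod (fun j _ => by positivity)]
  -- uniform convergence of the derivatives
  have huc : TendstoUniformlyOn f' psiR atTop s := by
    have hA : TendstoUniformlyOn (fun (N : ℕ) (_ : ℝ) => Real.log N - (harmonic N : ℝ))
        (fun _ => -Real.eulerMascheroniConstant) atTop s := by
      apply Tendsto.tendstoUniformlyOn_const
      have := (Real.tendsto_harmonic_sub_log).neg
      simpa [neg_sub] using this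
    have hB : TendstoUniformlyOn (fun (_ : ℕ) (y : ℝ) => -(1/y))
        (fun y => -(1/y)) atTop s := by
      intro u hu
      filter_upwards with N
      intro y hy
      simpa using mem_uniformity_of_eq hu rfl
    have hC : TendstoUniformlyOn
        (fun (N : ℕ) (y : ℝ) => ∑ j ∈ Finset.range N, (1/((j:ℝ)+1) - 1/(y+(j:ℝ)+1)))
        (fun y => ∑' j : ℕ, (1/((j:ℝ)+1) - 1/(y+(j:ℝ)+1))) atTop s := by
      apply tendstoUniformlyOn_tsum_nat
        (u := fun j => (x+1) * (1/((j:ℝ)+1)^2)) (((summable_one_div_add_one_pow le_rfl).mul_left (x+1)))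
      intro j y hy
      have hy0 := hpos y hy
      have hyx : y ≤ x + 1 := le_of_lt hy.2
      have h1 : (0:ℝ) < (j:ℝ)+1 := by positivity
      have h2 : (0:ℝ) < y+(j:ℝ)+1 := by linarith
      rw [div_sub_div _ _ h1.ne' h2.ne', one_mul, mul_one]
      have hnum : y+(j:ℝ)+1 - ((j:ℝ)+1) = y := by ring
      rw [hnum, Real.norm_eq_abs, abs_div, abs_of_pos hy0, abs_of_pos (by positivity)]
      rw [div_le_iff₀ (by positivity)]
      have hj1 : ((j:ℝ)+1) * ((j:ℝ)+1) ≤ (((j:ℝ)+1) * (y+(j:ℝ)+1)) := by nlinarith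
      calc y ≤ x+1 := hyx
      _ = (x+1) * (1/((j:ℝ)+1)^2) * ((j:ℝ)+1)^2 := by field_simp
      _ ≤ (x+1) * (1/((j:ℝ)+1)^2) * (((j:ℝ)+1) * (y+(j:ℝ)+1)) := by
          refine mul_le_mul_of_nonneg_left ?_ (by positivity)
          nlinarith
    have hsum := (hA.add hB).add hC
    refine (hsum.congr ?_).congr_right ?_
    · filter_upwards [eventually_ge_atTop 1] with N hN
      intro y hy
      have hy0 := hpos y hy
      simp only [Pi.add_apply, hf']
      have hh : (harmonic N : ℝ) = ∑ j ∈ Finset.range N, 1/((j:ℝ)+1) := by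
        rw [harmonic]
        push_cast
        simp [one_div]
      have hsum2 : ∑ j ∈ Finset.range (N+1), 1/(y + (j:ℝ))
          = 1/y + ∑ j ∈ Finset.range N, 1/(y+(j:ℝ)+1) := by
        rw [Finset.sum_range_succ']
        push_cast
        simp only [Nat.cast_zero, add_zero]
        rw [add_comm]
        congr 1
        refine Finset.sum_congr rfl fun j _ => by push_cast; ring_nf
      rw [hsum2, hh, Finset.sum_sub_distrib]
      ring
    · intro y hy
      simp only [Pi.add_apply, psiR]
      ring
  have := hasDerivAt_of_tendstoUniformlyOn hso huc
    (Eventually.of_forall hderiv) hptws hxs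
  exact this

lemma hasDerivAt_psiR {x : ℝ} (hx : 0 < x) :
    HasDerivAt psiR (∑' i : ℕ, ((x + (i:ℝ))^2)⁻¹) x := by
  have hT : HasDerivAt (fun y => ∑' k : ℕ, (1/((k:ℝ)+1) - 1/(y+(k:ℝ)+1)))
      (∑' k : ℕ, ((x+(k:ℝ)+1)^2)⁻¹) x := by
    refine hasDerivAt_tsum_of_isPreconnected
      (u := fun k : ℕ => (((x/2)+(k:ℝ)+1)^2)⁻¹)
      (g := fun (k:ℕ) (y:ℝ) => 1/((k:ℝ)+1) - 1/(y+(k:ℝ)+1))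
      (g' := fun (k:ℕ) (y:ℝ) => ((y+(k:ℝ)+1)^2)⁻¹)
      (t := Ioi (x/2)) (y₀ := x) (y := x)
      ?_ isOpen_Ioi (isPreconnected_Ioi) ?_ ?_ (mem_Ioi.2 (by linarith)) ?_ ?_
    · have := summable_inv_shift_pow (x := x/2 + 1) (by linarith) (p := 2) le_rfl
      refine this.congr fun k => ?_
      ring_nf
    · intro k y hy
      have hy0 : 0 < y := lt_trans (by linarith) hy
      have h2 : (0:ℝ) < y+(k:ℝ)+1 := by positivity
      have : HasDerivAt (fun y : ℝ => 1/(y+(k:ℝ)+1)) (-(1 / (y+(k:ℝ)+1)^2)) y := by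
        have h := ((hasDerivAt_id y).add_const ((k:ℝ)+1)).fun_inv (by positivity)
        simpa [one_div, add_assoc, neg_div] using h
      have h3 := (hasDerivAt_const y (1/((k:ℝ)+1))).fun_sub this
      simpa [one_div] using h3
    · intro k y hy
      have hy' : x/2 < y := hy
      have hy0 : (0:ℝ) < y := by linarith
      have h3 : (0:ℝ) < y+(k:ℝ)+1 := by positivity
      have h1 : (0:ℝ) < x/2+(k:ℝ)+1 := by positivity
      have h2 : x/2+(k:ℝ)+1 ≤ y+(k:ℝ)+1 := by linarith
      rw [Real.norm_eq_abs, abs_of_pos (by positivity)]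
      exact inv_anti₀ (by positivity) (by nlinarith)
    · exact summable_psi_term hx
    · exact mem_Ioi.2 (by linarith)
  have h1 : HasDerivAt (fun y : ℝ => -Real.eulerMascheroniConstant - 1/y)
      ((x^2)⁻¹) x := by
    have h0 := ((hasDerivAt_id x).inv hx.ne').const_sub (-Real.eulerMascheroniConstant)
    simpa [one_div, neg_div, neg_neg] using h0
  have h2 := h1.add hT
  have heq : ∑' i : ℕ, ((x + (i:ℝ))^2)⁻¹
      = (x^2)⁻¹ + ∑' k : ℕ, ((x+(k:ℝ)+1)^2)⁻¹ := by
    rw [Summable.tsum_eq_zero_add (summable_inv_shift_pow hx le_rfl)]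
    push_cast
    simp [add_assoc]
  rw [heq]
  exact h2


lemma hasDerivAt_tsum_inv_pow {m : ℕ} (hm : 1 ≤ m) {x : ℝ} (hx : 0 < x) :
    HasDerivAt (fun y : ℝ => ∑' i : ℕ, ((y+(i:ℝ))^(m+1))⁻¹)
      (∑' i : ℕ, (-((m:ℝ)+1) * ((x+(i:ℝ))^(m+2))⁻¹)) x := by
  refine hasDerivAt_tsum_of_isPreconnected
    (u := fun i : ℕ => ((m:ℝ)+1) * (((x/2)+(i:ℝ))^(m+2))⁻¹)
    (g := fun (i:ℕ) (y:ℝ) => ((y+(i:ℝ))^(m+1))⁻¹)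
    (g' := fun (i:ℕ) (y:ℝ) => -((m:ℝ)+1) * ((y+(i:ℝ))^(m+2))⁻¹)
    (t := Ioi (x/2)) (y₀ := x) (y := x)
    ?_ isOpen_Ioi isPreconnected_Ioi ?_ ?_ (mem_Ioi.2 (by linarith)) ?_ (mem_Ioi.2 (by linarith))
  · exact (summable_inv_shift_pow (by linarith : (0:ℝ) < x/2) (by omega)).mul_left _
  · intro i y hy
    have hy0 : (0:ℝ) < y := lt_trans (by linarith) hy
    have hyi : (0:ℝ) < y + i := by positivity
    have h := (((hasDerivAt_id y).add_const ((i:ℝ))).fun_pow (m+1)).fun_inv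
      (pow_ne_zero _ hyi.ne')
    have hv : -(↑(m + 1) * (y + (i:ℝ)) ^ (m + 1 - 1) * 1) / ((y + (i:ℝ)) ^ (m+1)) ^ 2
        = -((m:ℝ)+1) * ((y+(i:ℝ))^(m+2))⁻¹ := by
      have hpow : ((y + (i:ℝ)) ^ (m+1)) ^ 2 = (y + (i:ℝ))^(m+2) * (y + (i:ℝ))^m := by
        rw [← pow_mul, ← pow_add]
        congr 1
        ring
      rw [hpow]
      have h1 : (y + (i:ℝ))^(m+2) ≠ 0 := pow_ne_zero _ hyi.ne'
      have h2 : (y + (i:ℝ))^m ≠ 0 := pow_ne_zero _ hyi.ne'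
      field_simp
      push_cast
      ring
    simp only [id_eq] at h
    rw [hv] at h
    exact h
  · intro i y hy
    have hy0 : (0:ℝ) < y := lt_trans (by linarith) hy
    have hyi : (0:ℝ) < y + i := by positivity
    have h1 : (0:ℝ) < x/2 + i := by positivity
    rw [Real.norm_eq_abs, abs_mul, abs_neg, abs_of_pos (by positivity : (0:ℝ) < (m:ℝ)+1),
      abs_of_pos (by positivity : (0:ℝ) < ((y+(i:ℝ))^(m+2))⁻¹)]
    have : x/2 + (i:ℝ) ≤ y + i := by have := hy; simp at this; linarith
    refine mul_le_mul_of_nonneg_left ?_ (by positivity)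
    exact inv_anti₀ (by positivity) (pow_le_pow_left₀ h1.le this _)
  · exact summable_inv_shift_pow hx (by omega)

lemma iteratedDeriv_LG_series : ∀ m : ℕ, 1 ≤ m → ∀ x : ℝ, 0 < x →
    iteratedDeriv (m+1) LG x
      = (-1:ℝ)^(m+1) * (m.factorial : ℝ) * ∑' i : ℕ, ((x+(i:ℝ))^(m+1))⁻¹ := by
  intro m hm
  induction m, hm using Nat.le_induction with
  | base =>
    intro x hx
    rw [iteratedDeriv_succ, iteratedDeriv_one]
    have heq : deriv LG =ᶠ[𝓝 x] psiR := by
      filter_upwards [Ioi_mem_nhds hx] with y hy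
      exact (hasDerivAt_LG hy).deriv
    rw [heq.deriv_eq, (hasDerivAt_psiR hx).deriv]
    norm_num
  | succ m hm ih =>
    intro x hx
    rw [iteratedDeriv_succ]
    have heq : iteratedDeriv (m+1) LG =ᶠ[𝓝 x]
        (fun y => (-1:ℝ)^(m+1) * (m.factorial : ℝ) * ∑' i : ℕ, ((y+(i:ℝ))^(m+1))⁻¹) := by
      filter_upwards [Ioi_mem_nhds hx] with y hy
      exact ih y hy
    rw [heq.deriv_eq]
    have hd := (hasDerivAt_tsum_inv_pow hm hx).const_mul ((-1:ℝ)^(m+1) * (m.factorial : ℝ))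
    rw [hd.deriv, tsum_mul_left]
    push_cast [Nat.factorial_succ]
    ring

lemma key_ineq {a : ℝ} (ha : 2 ≤ a) {q : ℕ} (hq : 1 ≤ q) :
    (q:ℝ) * ((a^(q+1))⁻¹) ≤ ((a-1)^q)⁻¹ - (a^q)⁻¹ := by
  have h1 : (0:ℝ) < a - 1 := by linarith
  have h2 : (0:ℝ) < a := by linarith
  have hterm : ∀ i ∈ Finset.range q, (a-1)^(q-1) ≤ a^i * (a-1)^(q-1-i) := by
    intro i hi
    have hi' : i < q := Finset.mem_range.1 hi
    calc (a-1)^(q-1) = (a-1)^i * (a-1)^(q-1-i) := by rw [← pow_add]; congr 1; omega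
    _ ≤ a^i * (a-1)^(q-1-i) :=
        mul_le_mul_of_nonneg_right (pow_le_pow_left₀ h1.le (by linarith) i) (by positivity)
  have hsum : (q:ℝ) * (a-1)^(q-1) ≤ ∑ i ∈ Finset.range q, a^i * (a-1)^(q-1-i) := by
    calc (q:ℝ) * (a-1)^(q-1) = ∑ _i ∈ Finset.range q, (a-1)^(q-1) := by
          rw [Finset.sum_const, Finset.card_range, nsmul_eq_mul]
    _ ≤ _ := Finset.sum_le_sum hterm
  have hdiff : (q:ℝ) * (a-1)^(q-1) ≤ a^q - (a-1)^q := by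
    have hone : a - (a-1) = 1 := by ring
    calc (q:ℝ)*(a-1)^(q-1) ≤ ∑ i ∈ Finset.range q, a^i * (a-1)^(q-1-i) := hsum
    _ = (∑ i ∈ Finset.range q, a^i * (a-1)^(q-1-i)) * (a - (a-1)) := by rw [hone, mul_one]
    _ = a^q - (a-1)^q := geom_sum₂_mul a (a-1) q
  rw [inv_sub_inv (pow_ne_zero _ h1.ne') (pow_ne_zero _ h2.ne'), le_div_iff₀ (by positivity)]
  have e1 : (q:ℝ) * (a^(q+1))⁻¹ * ((a-1)^q * a^q) = (q:ℝ) * (a-1)^q / a := by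
    rw [pow_succ]
    field_simp
  rw [e1, div_le_iff₀ h2]
  have hpow : (a-1)^q ≤ (a-1)^(q-1) * a := by
    calc (a-1)^q = (a-1)^(q-1) * (a-1) := by rw [← pow_succ]; congr 1; omega
    _ ≤ (a-1)^(q-1) * a := by
        have := pow_pos h1 (q-1)
        nlinarith
  calc (q:ℝ) * (a-1)^q ≤ (q:ℝ) * ((a-1)^(q-1) * a) := by
        refine mul_le_mul_of_nonneg_left hpow (by positivity)
  _ = ((q:ℝ) * (a-1)^(q-1)) * a := by ring
  _ ≤ (a^q - (a-1)^q) * a := mul_le_mul_of_nonneg_right hdiff h2.le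

lemma tail_bound {x : ℝ} (hx : 1 ≤ x) {p : ℕ} (hp : 2 ≤ p) :
    ∑' i : ℕ, ((x+1+(i:ℝ))^p)⁻¹ ≤ ((p:ℝ)-1)⁻¹ * ((x^(p-1))⁻¹) := by
  set b : ℕ → ℝ := fun i => ((x+(i:ℝ))^(p-1))⁻¹ with hbdef
  have hpcast : ((p:ℝ)-1) = ((p-1 : ℕ) : ℝ) := by
    have : (1:ℕ) ≤ p := by omega
    push_cast [Nat.cast_sub this]
    ring
  have hppos : (0:ℝ) < (p:ℝ)-1 := by
    have : (2:ℝ) ≤ p := by exact_mod_cast hp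
    linarith
  apply Real.tsum_le_of_sum_range_le (fun i => by positivity)
  intro N
  have hb : ∀ i : ℕ, ((x+1+(i:ℝ))^p)⁻¹ ≤ ((p:ℝ)-1)⁻¹ * (b i - b (i+1)) := by
    intro i
    have hic : (0:ℝ) ≤ i := Nat.cast_nonneg i
    have ha : 2 ≤ x+1+(i:ℝ) := by linarith
    have hk := key_ineq ha (q := p-1) (by omega)
    have hq1 : (p-1)+1 = p := by omega
    rw [hq1] at hk
    have ha1 : x+1+(i:ℝ) - 1 = x + (i:ℝ) := by ring
    rw [ha1] at hk
    have hbsucc : b (i+1) = ((x+1+(i:ℝ))^(p-1))⁻¹ := by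
      simp only [hbdef]
      push_cast
      ring_nf
    have hc : (((p-1:ℕ):ℝ)) ≠ 0 := by rw [← hpcast]; exact hppos.ne'
    rw [hpcast, hbsucc]
    simp only [hbdef]
    calc ((x+1+(i:ℝ))^p)⁻¹
        = (((p-1:ℕ):ℝ))⁻¹ * (((p-1:ℕ):ℝ) * ((x+1+(i:ℝ))^p)⁻¹) := by
          rw [← mul_assoc, inv_mul_cancel₀ hc, one_mul]
    _ ≤ _ := mul_le_mul_of_nonneg_left hk (by positivity)
  calc ∑ i ∈ Finset.range N, ((x+1+(i:ℝ))^p)⁻¹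
      ≤ ∑ i ∈ Finset.range N, ((p:ℝ)-1)⁻¹ * (b i - b (i+1)) :=
        Finset.sum_le_sum (fun i _ => hb i)
  _ = ((p:ℝ)-1)⁻¹ * (b 0 - b N) := by rw [← Finset.mul_sum, Finset.sum_range_sub']
  _ ≤ ((p:ℝ)-1)⁻¹ * b 0 := by
      have hbN : 0 ≤ b N := by positivity
      have : b 0 - b N ≤ b 0 := by linarith
      exact mul_le_mul_of_nonneg_left this (by positivity)
  _ = ((p:ℝ)-1)⁻¹ * ((x^(p-1))⁻¹) := by simp [hbdef]

lemma sum_Icc_le_zetaR {s : ℕ} (hs : 2 ≤ s) (n : ℕ) :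
    ∑ k ∈ Finset.Icc 1 n, (((k:ℝ))^s)⁻¹ ≤ zetaR s := by
  have hsum := summable_one_div_add_one_pow hs
  calc ∑ k ∈ Finset.Icc 1 n, (((k:ℝ))^s)⁻¹
      = ∑ i ∈ Finset.range (n+1-1), ((((1+i:ℕ)):ℝ)^s)⁻¹ := by
        rw [← Finset.Ico_add_one_right_eq_Icc, Finset.sum_Ico_eq_sum_range]
  _ = ∑ i ∈ Finset.range (n+1-1), 1/(((i:ℕ):ℝ)+1)^s := by
      refine Finset.sum_congr rfl fun i _ => ?_
      push_cast
      rw [one_div, add_comm]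
  _ ≤ zetaR s := Summable.sum_le_tsum _ (fun i _ => by positivity) hsum

lemma polygamma_nat_bound {j : ℕ} (hj : 3 ≤ j) {k : ℕ} (hk : 1 ≤ k) :
    |polygamma (j-1) (k:ℝ)| ≤ ((j-2).factorial : ℝ) * (((k:ℝ)^(j-1))⁻¹)
      + ((j-1).factorial : ℝ) * (((k:ℝ)^j)⁻¹) := by
  have hk0 : (0:ℝ) < k := by exact_mod_cast hk
  have hk1 : (1:ℝ) ≤ k := by exact_mod_cast hk
  have hm : j - 1 + 1 = j := by omega
  have hser := iteratedDeriv_LG_series (j-1) (by omega) (k:ℝ) hk0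
  rw [hm] at hser
  have hpg : polygamma (j-1) (k:ℝ) = iteratedDeriv ((j-1)+1) LG (k:ℝ) := rfl
  rw [hpg, hm, hser]
  have hsummand : Summable (fun i : ℕ => (((k:ℝ)+(i:ℝ))^j)⁻¹) :=
    summable_inv_shift_pow hk0 (by omega)
  have hS0 : (0:ℝ) ≤ ∑' i : ℕ, (((k:ℝ)+(i:ℝ))^j)⁻¹ :=
    tsum_nonneg (fun i => by positivity)
  rw [abs_mul, abs_mul, abs_pow, abs_neg, abs_one, one_pow, one_mul, Nat.abs_cast,
    abs_of_nonneg hS0]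
  have hsplit : ∑' i : ℕ, (((k:ℝ)+(i:ℝ))^j)⁻¹
      = (((k:ℝ))^j)⁻¹ + ∑' i : ℕ, (((k:ℝ)+1+(i:ℝ))^j)⁻¹ := by
    rw [Summable.tsum_eq_zero_add hsummand]
    congr 1
    · norm_num
    · exact tsum_congr fun i => by push_cast; ring_nf
  have htail := tail_bound hk1 (p := j) (by omega)
  have hjj : ((j:ℝ)-1) ≠ 0 := by
    have : (3:ℝ) ≤ j := by exact_mod_cast hj
    linarith
  have hfact : (((j-1).factorial : ℕ) : ℝ) = ((j:ℝ)-1) * ((j-2).factorial : ℝ) := by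
    rw [show j-1 = (j-2)+1 by omega, Nat.factorial_succ]
    push_cast [show ((j-2+1:ℕ):ℝ) = (j:ℝ)-1 from by
      have h2 : (2:ℕ) ≤ j := by omega
      push_cast [Nat.cast_sub h2]
      ring]
    ring
  calc ((j-1).factorial : ℝ) * ∑' i : ℕ, (((k:ℝ)+(i:ℝ))^j)⁻¹
      ≤ ((j-1).factorial : ℝ) * ((((k:ℝ))^j)⁻¹ + ((j:ℝ)-1)⁻¹ * (((k:ℝ)^(j-1))⁻¹)) := by
        refine mul_le_mul_of_nonneg_left ?_ (by positivity)
        rw [hsplit]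
        exact (add_le_add_iff_left _).2 htail
  _ = ((j-2).factorial : ℝ) * (((k:ℝ)^(j-1))⁻¹) + ((j-1).factorial : ℝ) * (((k:ℝ)^j)⁻¹) := by
        rw [hfact]
        field_simp
        ring

theorem ginibre_logdet_cumulants {Ω : Type*} [MeasurableSpace Ω]
    (μ : Measure Ω) [IsProbabilityMeasure μ] (Z : Ω → ℝ)
    (n : ℕ) (β : ℝ) (hβ : β = 1 ∨ β = 2 ∨ β = 4)
    (hcgf : ∀ z : ℝ, |z| < β / 2 →
      cgf Z μ z =
        ∑ k ∈ Finset.Icc 1 n,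
          (Real.log (Real.Gamma (β * k / 2 + z)) - Real.log (Real.Gamma (β * k / 2)))) :
    (∀ j : ℕ, 2 ≤ j →
      cumulant Z μ j = ∑ k ∈ Finset.Icc 1 n, polygamma (j - 1) (β * k / 2)) ∧
    (β = 2 → ∀ j : ℕ, 3 ≤ j →
      |cumulant Z μ j| ≤
        ((j - 2).factorial : ℝ) * zetaR (j - 1) + ((j - 1).factorial : ℝ) * zetaR j) := by
  have hβpos : 0 < β := by rcases hβ with h|h|h <;> rw [h] <;> norm_num
  have hpart1 : ∀ j : ℕ, 2 ≤ j →
      cumulant Z μ j = ∑ k ∈ Finset.Icc 1 n, polygamma (j - 1) (β * k / 2) := by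
    intro j hj
    have hev : (fun t => cgf Z μ t) =ᶠ[𝓝 (0:ℝ)]
        (fun z => ∑ k ∈ Finset.Icc 1 n,
          (LG ((fun k : ℕ => β * k / 2) k + z) - (fun k : ℕ => LG (β * k / 2)) k)) := by
      filter_upwards [Metric.ball_mem_nhds (0:ℝ) (by positivity : (0:ℝ) < β/2)] with z hz
      have : |z| < β / 2 := by simpa [Real.dist_eq] using hz
      exact hcgf z this
    have h1 : cumulant Z μ j = iteratedDeriv j (fun t => cgf Z μ t) 0 := rfl
    rw [h1, hev.iteratedDeriv_eq j]
    have hshift := iteratedDeriv_sum_shift (n := n) (fun k : ℕ => β * k / 2)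
      (fun k : ℕ => LG (β * k / 2)) (β/2) (by positivity)
      (fun k hk => by
        have hk1 : 1 ≤ k := (Finset.mem_Icc.1 hk).1
        have : (1:ℝ) ≤ k := by exact_mod_cast hk1
        rw [div_le_div_iff₀ (by norm_num) (by norm_num)]
        nlinarith)
      j (by omega) 0 (by constructor <;> [linarith; linarith])
    rw [hshift]
    refine Finset.sum_congr rfl fun k hk => ?_
    have hpg : polygamma (j-1) (β * k / 2) = iteratedDeriv ((j-1)+1) LG (β * k / 2) := rfl
    rw [hpg, show j-1+1 = j from by omega, add_zero]
  refine ⟨hpart1, ?_⟩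
  intro hβ2 j hj
  subst hβ2
  rw [hpart1 j (by omega)]
  have hsimp : ∀ k : ℕ, (2:ℝ) * k / 2 = (k:ℝ) := fun k => by ring
  calc |∑ k ∈ Finset.Icc 1 n, polygamma (j - 1) (2 * (k:ℝ) / 2)|
      ≤ ∑ k ∈ Finset.Icc 1 n, |polygamma (j - 1) (2 * (k:ℝ) / 2)| :=
        Finset.abs_sum_le_sum_abs _ _
  _ ≤ ∑ k ∈ Finset.Icc 1 n, (((j-2).factorial : ℝ) * (((k:ℝ)^(j-1))⁻¹)
        + ((j-1).factorial : ℝ) * (((k:ℝ)^j)⁻¹)) := by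
      refine Finset.sum_le_sum fun k hk => ?_
      rw [hsimp k]
      exact polygamma_nat_bound hj (Finset.mem_Icc.1 hk).1
  _ = ((j-2).factorial : ℝ) * (∑ k ∈ Finset.Icc 1 n, ((k:ℝ)^(j-1))⁻¹)
        + ((j-1).factorial : ℝ) * (∑ k ∈ Finset.Icc 1 n, ((k:ℝ)^j)⁻¹) := by
      rw [Finset.sum_add_distrib, Finset.mul_sum, Finset.mul_sum]
  _ ≤ ((j-2).factorial : ℝ) * zetaR (j-1) + ((j-1).factorial : ℝ) * zetaR j := by
      refine add_le_add ?_ ?_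
      · exact mul_le_mul_of_nonneg_left (sum_Icc_le_zetaR (by omega) n) (by positivity)
      · exact mul_le_mul_of_nonneg_left (sum_Icc_le_zetaR (by omega) n) (by positivity)
end
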